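/- (Corollary to Proposition 3: minimum cut computes the regularized band score.) Let T = {t₁, …, t_n} be time series on a finite domain of size m, α > 0, and x ∈ T. For each coordinate i let p_{i1} < p_{i2} < … be the sorted distinct values {t_j(i) : j ∈ [n]}, and let c_{ij} = |{ ℓ ∈ [n] : t_ℓ(i) ≤ p_{ij} }| with c_{i0} = 0. Build a weighted directed graph G whose nodes are a_{ij} (one per pair (i,j) with p_{ij} defined), b₁, …, b_n, a source θ and a sink η, with the following edges: for each a_{ij} with p_{ij} > x(i), an edge (a_{i(j−1)}, a_{ij}) of weight n − c_{i(j−1)} + (m/α)(p_{i(j−1)} − x(i)); for each a_{ij} with p_{ij} < x(i), an edge (a_{i(j+1)}, a_{ij}) of weight c_{ij} + (m/α)(x(i) − p_{i(j+1)}); for each a_{ij} with p_{ij} = x(i), an edge (θ, a_{ij}) of weight ∞; for each i, with ℓ = |p_i|, edges (a_{iℓ}, η) of weight (m/α)(p_{iℓ} − x(i)) and (a_{i1}, η) of weight (m/α)(x(i) − p_{i1}); and for each i ∈ [m], ℓ ∈ [n], with j such that p_{ij} = t_ℓ(i), edges (a_{ij}, b_ℓ) of weight 1 and (b_ℓ,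 a_{ij}) of weight ∞. For a partition (X, Y) of the nodes with θ ∈ X and η ∈ Y, the cut value is the total weight of edges from X to Y. Then if (X, Y) is a minimum (θ,η)-cut of G and U = { t_ℓ : b_ℓ ∈ X }, one has Reg(U;α) = min { Reg(U′;α) : U′ ⊆ T, x ∈ U′ }; equivalently, the minimum cut value equals n·m + (m/α) · min { Reg(U′;α) : U′ ⊆ T, x ∈ U′ }. -/

import Mathlib

open Finset
open scoped Classical ENNReal

noncomputable section

/-- The distinct values observed at coordinate `i` among the time series `t₁, …, t_n`. -/
def vals {n m : ℕ} (t : Fin n → Fin m → ℝ) (i : Fin m) : Finset ℝ :=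
  Finset.univ.image fun ℓ => t ℓ i

/-- `cnt t i v` is the number of time series whose value at coordinate `i` is at most `v`. -/
def cnt {n m : ℕ} (t : Fin n → Fin m → ℝ) (i : Fin m) (v : ℝ) : ℕ :=
  (Finset.univ.filter fun ℓ => t ℓ i ≤ v).card

/-- `u` and `v` are consecutive values at coordinate `i`: both occur, `u < v`, and no
observed value lies strictly between them. -/
def Consecutive {n m : ℕ} (t : Fin n → Fin m → ℝ) (i : Fin m) (u v : ℝ) : Prop :=
  u ∈ vals t i ∧ v ∈ vals t i ∧ u < v ∧ ∀ w ∈ vals t i, ¬ (u < w ∧ w < v)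

/-- The nodes of the minimum-cut graph: a node `a i v` for each coordinate `i` and value
`v` (only nodes with `v ∈ vals t i` carry edges), a node `b ℓ` for each time series, a
source `src` (θ) and a sink `snk` (η). -/
inductive Node (n m : ℕ) : Type
  | a : Fin m → ℝ → Node n m
  | b : Fin n → Node n m
  | src : Node n m
  | snk : Node n m

/-- The edge weights of the minimum-cut graph of the paper (weight `0` means no edge):
* `(a i u, a i v)` with `u, v` consecutive at `i` and `v > x i` has weight
  `n − c_{i,u} + (m/α)(u − x i)`;
* `(a i u, a i v)` with `v, u` consecutive at `i` and `v < x i` has weight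
  `c_{i,v} + (m/α)(x i − u)`;
* `(θ, a i v)` with `v = x i` has weight `∞`;
* `(a i v, η)` with `v` the largest value at `i` has weight `(m/α)(v − x i)`, and with
  `v` the smallest value at `i` has weight `(m/α)(x i − v)`;
* `(a i v, b ℓ)` with `t ℓ i = v` has weight `1` and `(b ℓ, a i v)` has weight `∞`. -/
def wgt {n m : ℕ} (t : Fin n → Fin m → ℝ) (x : Fin m → ℝ) (α : ℝ) :
    Node n m → Node n m → ℝ≥0∞
  | .a i u, .a i' v =>
      if i = i' then
        (if Consecutive t i u v ∧ x i < v then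
            ENNReal.ofReal ((n : ℝ) - (cnt t i u : ℝ) + ((m : ℝ) / α) * (u - x i)) else 0) +
        (if Consecutive t i v u ∧ v < x i then
            ENNReal.ofReal ((cnt t i v : ℝ) + ((m : ℝ) / α) * (x i - u)) else 0)
      else 0
  | .src, .a i v => if v = x i then ⊤ else 0
  | .a i v, .snk =>
      (if v ∈ vals t i ∧ (∀ w ∈ vals t i, w ≤ v) then
          ENNReal.ofReal (((m : ℝ) / α) * (v - x i)) else 0) +
      (if v ∈ vals t i ∧ (∀ w ∈ vals t i, v ≤ w) then
          ENNReal.ofReal (((m : ℝ) / α) * (x i - v)) else 0)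
  | .a i v, .b ℓ => if t ℓ i = v then 1 else 0
  | .b ℓ, .a i v => if t ℓ i = v then ⊤ else 0
  | _, _ => 0

/-- The value of the cut `(X, Xᶜ)`: the total weight of edges from `X` to its complement. -/
def cutVal {n m : ℕ} (t : Fin n → Fin m → ℝ) (x : Fin m → ℝ) (α : ℝ)
    (X : Set (Node n m)) : ℝ≥0∞ :=
  ∑' p : Node n m × Node n m,
    if p.1 ∈ X ∧ p.2 ∉ X then wgt t x α p.1 p.2 else 0

/-- The envelope-area score of the sub-family of `t` picked out by an index set `S`. -/
def score1Idx {n m : ℕ} (t : Fin n → Fin m → ℝ) (S : Finset (Fin n)) : ℝ :=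
  ∑ i : Fin m, (sSup ((fun ℓ => t ℓ i) '' (S : Set (Fin n))) -
                sInf ((fun ℓ => t ℓ i) '' (S : Set (Fin n))))

/-- The regularized score `Reg(S;α) = Score₁(S) − α|S|`. -/
def regIdx {n m : ℕ} (t : Fin n → Fin m → ℝ) (α : ℝ) (S : Finset (Fin n)) : ℝ :=
  score1Idx t S - α * S.card

namespace RegBand

variable {n m : ℕ}

lemma mem_vals (t : Fin n → Fin m → ℝ) (ℓ : Fin n) (i : Fin m) : t ℓ i ∈ vals t i :=
  Finset.mem_image_of_mem _ (Finset.mem_univ _)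

lemma cnt_le_n (t : Fin n → Fin m → ℝ) (i : Fin m) (v : ℝ) : cnt t i v ≤ n := by
  classical
  exact (Finset.card_filter_le _ _).trans (by simp)

lemma succ_unique {t : Fin n → Fin m → ℝ} {i : Fin m} {u v v' : ℝ}
    (h : Consecutive t i u v) (h' : Consecutive t i u v') : v = v' := by
  by_contra hne
  rcases lt_or_gt_of_ne hne with hlt | hlt
  · exact h'.2.2.2 v h.2.1 ⟨h.2.2.1, hlt⟩
  · exact h.2.2.2 v' h'.2.1 ⟨h'.2.2.1, hlt⟩

lemma exists_succ {t : Fin n → Fin m → ℝ} {i : Fin m} {u w : ℝ}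
    (hu : u ∈ vals t i) (hw : w ∈ vals t i) (huw : u < w) :
    ∃ v, Consecutive t i u v ∧ v ≤ w := by
  classical
  set F := (vals t i).filter (fun z => u < z) with hF
  have hne : F.Nonempty := ⟨w, by simp [hF, hw, huw]⟩
  have hmem := Finset.mem_filter.mp (by rw [hF] at *; exact F.min'_mem hne)
  refine ⟨F.min' hne, ⟨hu, ?_, ?_, ?_⟩, ?_⟩
  · exact hmem.1
  · exact hmem.2
  · intro z hz hcon
    have hzF : z ∈ F := by simp [hF, hz, hcon.1]
    exact absurd (F.min'_le z hzF) (not_le.mpr hcon.2)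
  · exact F.min'_le w (by simp [hF, hw, huw])

lemma exists_pred {t : Fin n → Fin m → ℝ} {i : Fin m} {u w : ℝ}
    (hu : u ∈ vals t i) (hw : w ∈ vals t i) (huw : w < u) :
    ∃ v, Consecutive t i v u ∧ w ≤ v := by
  classical
  set F := (vals t i).filter (fun z => z < u) with hF
  have hne : F.Nonempty := ⟨w, by simp [hF, hw, huw]⟩
  have hmem := Finset.mem_filter.mp (by rw [hF] at *; exact F.max'_mem hne)
  refine ⟨F.max' hne, ⟨?_, hu, ?_, ?_⟩, ?_⟩
  · exact hmem.1
  · exact hmem.2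
  · intro z hz hcon
    have hzF : z ∈ F := by simp [hF, hz, hcon.2]
    exact absurd (F.le_max' z hzF) (not_le.mpr hcon.1)
  · exact F.le_max' w (by simp [hF, hw, huw])

/-- The summand of `cutVal`. -/
def cf (t : Fin n → Fin m → ℝ) (x : Fin m → ℝ) (α : ℝ) (X : Set (Node n m))
    (p q : Node n m) : ℝ≥0∞ :=
  if p ∈ X ∧ q ∉ X then wgt t x α p q else 0

lemma cutVal_eq_tsum (t : Fin n → Fin m → ℝ) (x : Fin m → ℝ) (α : ℝ) (X : Set (Node n m)) :
    cutVal t x α X = ∑' p : Node n m × Node n m, cf t x α X p.1 p.2 := rfl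

def EAA (t : Fin n → Fin m → ℝ) : Finset (Node n m × Node n m) :=
  Finset.univ.biUnion fun i =>
    ((vals t i) ×ˢ (vals t i)).image fun uv => (Node.a i uv.1, Node.a i uv.2)

def ESA (x : Fin m → ℝ) : Finset (Node n m × Node n m) :=
  Finset.univ.image fun i : Fin m => ((Node.src : Node n m), Node.a i (x i))

def EAS (t : Fin n → Fin m → ℝ) : Finset (Node n m × Node n m) :=
  Finset.univ.biUnion fun i => (vals t i).image fun v => (Node.a i v, (Node.snk : Node n m))

def EAB (t : Fin n → Fin m → ℝ) : Finset (Node n m × Node n m) :=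
  (Finset.univ ×ˢ Finset.univ).image fun iℓ : Fin m × Fin n =>
    (Node.a iℓ.1 (t iℓ.2 iℓ.1), Node.b iℓ.2)

def EBA (t : Fin n → Fin m → ℝ) : Finset (Node n m × Node n m) :=
  (Finset.univ ×ˢ Finset.univ).image fun iℓ : Fin m × Fin n =>
    (Node.b iℓ.2, Node.a iℓ.1 (t iℓ.2 iℓ.1))

def EE (t : Fin n → Fin m → ℝ) (x : Fin m → ℝ) : Finset (Node n m × Node n m) :=
  EAA t ∪ ESA x ∪ EAS t ∪ EAB t ∪ EBA t

lemma support_wgt (t : Fin n → Fin m → ℝ) (x : Fin m → ℝ) (α : ℝ) :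
    ∀ p q : Node n m, wgt t x α p q ≠ 0 → (p, q) ∈ EE t x := by
  intro p q h
  match p, q with
  | .a i u, .a i' v =>
      rw [wgt] at h
      by_cases hii : i = i'
      · subst hii
        rw [if_pos rfl] at h
        rw [Ne, add_eq_zero, not_and_or] at h
        have huv : u ∈ vals t i ∧ v ∈ vals t i := by
          rcases h with h3 | h3
          · by_cases hc : Consecutive t i u v ∧ x i < v
            · exact ⟨hc.1.1, hc.1.2.1⟩
            · exact absurd (if_neg hc) h3
          · by_cases hc : Consecutive t i v u ∧ v < x i
            · exact ⟨hc.1.2.1, hc.1.1⟩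
            · exact absurd (if_neg hc) h3
        simp only [EE, EAA, Finset.mem_union, Finset.mem_biUnion]
        exact Or.inl <| Or.inl <| Or.inl <| Or.inl <| ⟨i, Finset.mem_univ i,
          Finset.mem_image.mpr ⟨(u, v), Finset.mem_product.mpr ⟨huv.1, huv.2⟩, rfl⟩⟩
      · exact absurd (if_neg hii) h
  | .src, .a i v =>
      rw [wgt] at h
      by_cases hv : v = x i
      · subst hv
        simp only [EE, ESA, Finset.mem_union, Finset.mem_image]
        exact Or.inl <| Or.inl <| Or.inl <| Or.inr <| ⟨i, Finset.mem_univ i, rfl⟩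
      · exact absurd (if_neg hv) h
  | .a i v, .snk =>
      rw [wgt] at h
      rw [Ne, add_eq_zero, not_and_or] at h
      have hv : v ∈ vals t i := by
        rcases h with h3 | h3
        · by_cases hc : v ∈ vals t i ∧ ∀ w ∈ vals t i, w ≤ v
          · exact hc.1
          · exact absurd (if_neg hc) h3
        · by_cases hc : v ∈ vals t i ∧ ∀ w ∈ vals t i, v ≤ w
          · exact hc.1
          · exact absurd (if_neg hc) h3
      simp only [EE, EAS, Finset.mem_union, Finset.mem_biUnion]
      exact Or.inl <| Or.inl <| Or.inr <| ⟨i, Finset.mem_univ i,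
        Finset.mem_image.mpr ⟨v, hv, rfl⟩⟩
  | .a i v, .b ℓ =>
      rw [wgt] at h
      by_cases hv : t ℓ i = v
      · subst hv
        simp only [EE, EAB, Finset.mem_union, Finset.mem_image]
        exact Or.inl <| Or.inr <| ⟨(i, ℓ), by simp, rfl⟩
      · exact absurd (if_neg hv) h
  | .b ℓ, .a i v =>
      rw [wgt] at h
      by_cases hv : t ℓ i = v
      · subst hv
        simp only [EE, EBA, Finset.mem_union, Finset.mem_image]
        exact Or.inr <| ⟨(i, ℓ), by simp, rfl⟩
      · exact absurd (if_neg hv) h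
  | .a i v, .src => exact absurd rfl h
  | .b ℓ, .b ℓ' => exact absurd rfl h
  | .b ℓ, .src => exact absurd rfl h
  | .b ℓ, .snk => exact absurd rfl h
  | .src, .src => exact absurd rfl h
  | .src, .snk => exact absurd rfl h
  | .src, .b ℓ => exact absurd rfl h
  | .snk, q => exact absurd rfl h

lemma cutVal_eq_sum_EE (t : Fin n → Fin m → ℝ) (x : Fin m → ℝ) (α : ℝ) (X : Set (Node n m)) :
    cutVal t x α X = ∑ p ∈ EE t x, cf t x α X p.1 p.2 := by
  rw [cutVal_eq_tsum]
  apply tsum_eq_sum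
  intro p hp
  rw [cf]
  split
  · by_contra hne
    exact hp (by simpa using support_wgt t x α p.1 p.2 hne)
  · rfl


lemma sum_EAA (t : Fin n → Fin m → ℝ) (f : Node n m × Node n m → ℝ≥0∞) :
    ∑ p ∈ EAA t, f p =
      ∑ i : Fin m, ∑ u ∈ vals t i, ∑ v ∈ vals t i, f (Node.a i u, Node.a i v) := by
  rw [EAA, Finset.sum_biUnion]
  · refine Finset.sum_congr rfl fun i _ => ?_
    rw [Finset.sum_image, Finset.sum_product]
    rintro ⟨u, v⟩ h1 ⟨u', v'⟩ h2 h3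
    simpa [Prod.ext_iff] using h3
  · intro i _ j _ hij
    refine Finset.disjoint_left.mpr ?_
    rintro p hp hq
    simp only [Finset.mem_image] at hp hq
    obtain ⟨⟨u, v⟩, -, rfl⟩ := hp
    obtain ⟨⟨u', v'⟩, -, h⟩ := hq
    simp [Prod.ext_iff] at h
    exact hij h.1.1.symm

lemma sum_ESA (x : Fin m → ℝ) (f : Node n m × Node n m → ℝ≥0∞) :
    ∑ p ∈ ESA x, f p = ∑ i : Fin m, f (Node.src, Node.a i (x i)) := by
  rw [ESA, Finset.sum_image]
  intro i _ j _ h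
  simp [Prod.ext_iff] at h
  exact h.1

lemma sum_EAS (t : Fin n → Fin m → ℝ) (f : Node n m × Node n m → ℝ≥0∞) :
    ∑ p ∈ EAS t, f p = ∑ i : Fin m, ∑ v ∈ vals t i, f (Node.a i v, Node.snk) := by
  rw [EAS, Finset.sum_biUnion]
  · refine Finset.sum_congr rfl fun i _ => ?_
    rw [Finset.sum_image]
    intro u _ v _ h
    simp [Prod.ext_iff] at h
    exact h
  · intro i _ j _ hij
    refine Finset.disjoint_left.mpr ?_
    rintro p hp hq
    simp only [Finset.mem_image] at hp hq
    obtain ⟨u, -, rfl⟩ := hp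
    obtain ⟨u', -, h⟩ := hq
    simp [Prod.ext_iff] at h
    exact hij h.1.symm

lemma sum_EAB (t : Fin n → Fin m → ℝ) (f : Node n m × Node n m → ℝ≥0∞) :
    ∑ p ∈ EAB t, f p = ∑ i : Fin m, ∑ ℓ : Fin n, f (Node.a i (t ℓ i), Node.b ℓ) := by
  rw [EAB, Finset.sum_image, Finset.sum_product]
  rintro ⟨i, ℓ⟩ _ ⟨i', ℓ'⟩ _ h
  simp [Prod.ext_iff] at h
  simp [h.1.1, h.2]

lemma sum_EBA (t : Fin n → Fin m → ℝ) (f : Node n m × Node n m → ℝ≥0∞) :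
    ∑ p ∈ EBA t, f p = ∑ i : Fin m, ∑ ℓ : Fin n, f (Node.b ℓ, Node.a i (t ℓ i)) := by
  rw [EBA, Finset.sum_image, Finset.sum_product]
  rintro ⟨i, ℓ⟩ _ ⟨i', ℓ'⟩ _ h
  simp [Prod.ext_iff] at h
  simp [h.2.1, h.1]

lemma cutVal_pieces (t : Fin n → Fin m → ℝ) (x : Fin m → ℝ) (α : ℝ) (X : Set (Node n m)) :
    cutVal t x α X =
      (∑ i : Fin m, ∑ u ∈ vals t i, ∑ v ∈ vals t i, cf t x α X (Node.a i u) (Node.a i v))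
    + (∑ i : Fin m, cf t x α X Node.src (Node.a i (x i)))
    + (∑ i : Fin m, ∑ v ∈ vals t i, cf t x α X (Node.a i v) Node.snk)
    + (∑ i : Fin m, ∑ ℓ : Fin n, cf t x α X (Node.a i (t ℓ i)) (Node.b ℓ))
    + (∑ i : Fin m, ∑ ℓ : Fin n, cf t x α X (Node.b ℓ) (Node.a i (t ℓ i))) := by
  have dis : ∀ (A B : Finset (Node n m × Node n m)),
      (∀ p ∈ A, ∀ q ∈ B, p ≠ q) → Disjoint A B := by
    intro A B h
    refine Finset.disjoint_left.mpr fun p hp hq => (h p hp p hq) rfl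
  rw [cutVal_eq_sum_EE, EE]
  rw [Finset.sum_union, Finset.sum_union, Finset.sum_union, Finset.sum_union]
  · rw [sum_EAA, sum_ESA, sum_EAS, sum_EAB, sum_EBA]
  · -- Disjoint EAA ESA
    apply dis
    rintro p hp q hq
    simp only [EAA, ESA, Finset.mem_biUnion, Finset.mem_image] at hp hq
    obtain ⟨i, -, ⟨uv, -, rfl⟩⟩ := hp
    obtain ⟨j, -, rfl⟩ := hq
    simp [Prod.ext_iff]
  · -- Disjoint (EAA ∪ ESA) EAS
    rw [Finset.disjoint_union_left]
    constructor <;> apply dis <;> rintro p hp q hq <;>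
      simp only [EAA, ESA, EAS, Finset.mem_biUnion, Finset.mem_image] at hp hq
    · obtain ⟨i, -, ⟨uv, -, rfl⟩⟩ := hp
      obtain ⟨j, -, ⟨v, -, rfl⟩⟩ := hq
      simp [Prod.ext_iff]
    · obtain ⟨i, -, rfl⟩ := hp
      obtain ⟨j, -, ⟨v, -, rfl⟩⟩ := hq
      simp [Prod.ext_iff]
  · -- Disjoint (EAA ∪ ESA ∪ EAS) EAB
    rw [Finset.disjoint_union_left, Finset.disjoint_union_left]
    refine ⟨⟨?_, ?_⟩, ?_⟩ <;> apply dis <;> rintro p hp q hq <;>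
      simp only [EAA, ESA, EAS, EAB, Finset.mem_biUnion, Finset.mem_image] at hp hq <;>
      obtain ⟨iℓ, -, rfl⟩ := hq
    · obtain ⟨i, -, ⟨uv, -, rfl⟩⟩ := hp
      simp [Prod.ext_iff]
    · obtain ⟨j, -, rfl⟩ := hp
      simp [Prod.ext_iff]
    · obtain ⟨i, -, ⟨v, -, rfl⟩⟩ := hp
      simp [Prod.ext_iff]
  · -- Disjoint (... ) EBA
    rw [Finset.disjoint_union_left, Finset.disjoint_union_left, Finset.disjoint_union_left]
    refine ⟨⟨⟨?_, ?_⟩, ?_⟩, ?_⟩ <;> apply dis <;> rintro p hp q hq <;>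
      simp only [EAA, ESA, EAS, EAB, EBA, Finset.mem_biUnion, Finset.mem_image] at hp hq <;>
      obtain ⟨iℓ, -, rfl⟩ := hq
    · obtain ⟨i, -, ⟨uv, -, rfl⟩⟩ := hp
      simp [Prod.ext_iff]
    · obtain ⟨j, -, rfl⟩ := hp
      simp [Prod.ext_iff]
    · obtain ⟨i, -, ⟨v, -, rfl⟩⟩ := hp
      simp [Prod.ext_iff]
    · obtain ⟨iℓ', -, rfl⟩ := hp
      simp [Prod.ext_iff]

/-- number of series strictly below `v` at coordinate `i`. -/
def Nlt (t : Fin n → Fin m → ℝ) (i : Fin m) (v : ℝ) : ℕ :=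
  (Finset.univ.filter fun ℓ => t ℓ i < v).card

lemma cnt_pred {t : Fin n → Fin m → ℝ} {i : Fin m} {v u : ℝ}
    (h : Consecutive t i v u) : cnt t i v = Nlt t i u := by
  rw [cnt, Nlt]
  congr 1
  apply Finset.filter_congr
  intro ℓ _
  constructor
  · intro h'; exact lt_of_le_of_lt h' h.2.2.1
  · intro h'
    by_contra hle
    exact h.2.2.2 (t ℓ i) (mem_vals t ℓ i) ⟨not_le.mp hle, h'⟩

lemma cnt_add_gt (t : Fin n → Fin m → ℝ) (i : Fin m) (v : ℝ) :
    cnt t i v + (Finset.univ.filter fun ℓ => v < t ℓ i).card = n := by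
  classical
  have h := Finset.card_filter_add_card_filter_not
    (s := (Finset.univ : Finset (Fin n))) (p := fun ℓ => t ℓ i ≤ v)
  rw [cnt]
  have h2 : (Finset.univ.filter fun ℓ => v < t ℓ i)
      = (Finset.univ.filter fun ℓ => ¬ (t ℓ i ≤ v)) := by
    apply Finset.filter_congr
    intro ℓ _
    exact not_le.symm
  rw [h2]
  simpa using h

def hiF (t : Fin n → Fin m → ℝ) (S : Finset (Fin n)) (i : Fin m) : ℝ :=
  sSup ((fun ℓ => t ℓ i) '' (S : Set (Fin n)))

def loF (t : Fin n → Fin m → ℝ) (S : Finset (Fin n)) (i : Fin m) : ℝ :=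
  sInf ((fun ℓ => t ℓ i) '' (S : Set (Fin n)))

lemma hiF_eq_max' (t : Fin n → Fin m → ℝ) {S : Finset (Fin n)} (hS : S.Nonempty) (i : Fin m) :
    hiF t S i = (S.image fun ℓ => t ℓ i).max' (hS.image _) := by
  rw [hiF, ← Finset.coe_image]
  exact Finset.Nonempty.csSup_eq_max' (hS.image _)

lemma loF_eq_min' (t : Fin n → Fin m → ℝ) {S : Finset (Fin n)} (hS : S.Nonempty) (i : Fin m) :
    loF t S i = (S.image fun ℓ => t ℓ i).min' (hS.image _) := by
  rw [loF, ← Finset.coe_image]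
  exact Finset.Nonempty.csInf_eq_min' (hS.image _)

lemma hiF_mem (t : Fin n → Fin m → ℝ) {S : Finset (Fin n)} (hS : S.Nonempty) (i : Fin m) :
    ∃ ℓ ∈ S, t ℓ i = hiF t S i := by
  rw [hiF_eq_max' t hS i]
  have := (S.image fun ℓ => t ℓ i).max'_mem (hS.image _)
  simpa using Finset.mem_image.mp this

lemma loF_mem (t : Fin n → Fin m → ℝ) {S : Finset (Fin n)} (hS : S.Nonempty) (i : Fin m) :
    ∃ ℓ ∈ S, t ℓ i = loF t S i := by
  rw [loF_eq_min' t hS i]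
  have := (S.image fun ℓ => t ℓ i).min'_mem (hS.image _)
  simpa using Finset.mem_image.mp this

lemma hiF_mem_vals (t : Fin n → Fin m → ℝ) {S : Finset (Fin n)} (hS : S.Nonempty) (i : Fin m) :
    hiF t S i ∈ vals t i := by
  obtain ⟨ℓ, -, h⟩ := hiF_mem t hS i
  exact h ▸ mem_vals t ℓ i

lemma loF_mem_vals (t : Fin n → Fin m → ℝ) {S : Finset (Fin n)} (hS : S.Nonempty) (i : Fin m) :
    loF t S i ∈ vals t i := by
  obtain ⟨ℓ, -, h⟩ := loF_mem t hS i
  exact h ▸ mem_vals t ℓ i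

lemma le_hiF (t : Fin n → Fin m → ℝ) {S : Finset (Fin n)} (hS : S.Nonempty) (i : Fin m)
    {ℓ : Fin n} (hℓ : ℓ ∈ S) : t ℓ i ≤ hiF t S i := by
  rw [hiF_eq_max' t hS i]
  exact Finset.le_max' _ (t ℓ i) (Finset.mem_image_of_mem (fun ℓ => t ℓ i) hℓ)

lemma loF_le (t : Fin n → Fin m → ℝ) {S : Finset (Fin n)} (hS : S.Nonempty) (i : Fin m)
    {ℓ : Fin n} (hℓ : ℓ ∈ S) : loF t S i ≤ t ℓ i := by
  rw [loF_eq_min' t hS i]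
  exact Finset.min'_le _ (t ℓ i) (Finset.mem_image_of_mem (fun ℓ => t ℓ i) hℓ)

lemma loF_le_hiF (t : Fin n → Fin m → ℝ) {S : Finset (Fin n)} (hS : S.Nonempty) (i : Fin m) :
    loF t S i ≤ hiF t S i := by
  obtain ⟨ℓ, hℓ⟩ := hS.exists_mem
  exact (loF_le t hS i hℓ).trans (le_hiF t hS i hℓ)

/-- The canonical cut associated with an index set `S`. -/
def XS (t : Fin n → Fin m → ℝ) (S : Finset (Fin n)) : Set (Node n m) :=
  fun p => match p with
  | .a i v => loF t S i ≤ v ∧ v ≤ hiF t S i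
  | .b ℓ => ℓ ∈ S
  | .src => True
  | .snk => False

lemma mem_XS_a {t : Fin n → Fin m → ℝ} {S : Finset (Fin n)} {i : Fin m} {v : ℝ} :
    Node.a i v ∈ XS t S ↔ loF t S i ≤ v ∧ v ≤ hiF t S i := Iff.rfl

lemma mem_XS_b {t : Fin n → Fin m → ℝ} {S : Finset (Fin n)} {ℓ : Fin n} :
    Node.b ℓ ∈ XS t S ↔ ℓ ∈ S := Iff.rfl

lemma src_mem_XS {t : Fin n → Fin m → ℝ} {S : Finset (Fin n)} :
    (Node.src : Node n m) ∈ XS t S := trivial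

lemma snk_not_mem_XS {t : Fin n → Fin m → ℝ} {S : Finset (Fin n)} :
    (Node.snk : Node n m) ∉ XS t S := fun h => h

lemma pred_unique {t : Fin n → Fin m → ℝ} {i : Fin m} {u v v' : ℝ}
    (h : Consecutive t i v u) (h' : Consecutive t i v' u) : v = v' := by
  by_contra hne
  rcases lt_or_gt_of_ne hne with hlt | hlt
  · exact h.2.2.2 v' h'.1 ⟨hlt, h'.2.2.1⟩
  · exact h'.2.2.2 v h.1 ⟨hlt, h.2.2.1⟩

lemma wgt_aa (t : Fin n → Fin m → ℝ) (x : Fin m → ℝ) (α : ℝ) (i : Fin m) (u v : ℝ) :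
    wgt t x α (Node.a i u) (Node.a i v) =
      (if Consecutive t i u v ∧ x i < v then
          ENNReal.ofReal ((n : ℝ) - (cnt t i u : ℝ) + ((m : ℝ) / α) * (u - x i)) else 0) +
      (if Consecutive t i v u ∧ v < x i then
          ENNReal.ofReal ((cnt t i v : ℝ) + ((m : ℝ) / α) * (x i - u)) else 0) := by
  rw [wgt, if_pos rfl]

lemma wgt_as (t : Fin n → Fin m → ℝ) (x : Fin m → ℝ) (α : ℝ) (i : Fin m) (v : ℝ) :
    wgt t x α (Node.a i v) Node.snk =
      (if v ∈ vals t i ∧ (∀ w ∈ vals t i, w ≤ v) then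
          ENNReal.ofReal (((m : ℝ) / α) * (v - x i)) else 0) +
      (if v ∈ vals t i ∧ (∀ w ∈ vals t i, v ≤ w) then
          ENNReal.ofReal (((m : ℝ) / α) * (x i - v)) else 0) := by
  rw [wgt]

lemma wgt_ab (t : Fin n → Fin m → ℝ) (x : Fin m → ℝ) (α : ℝ) (i : Fin m) (v : ℝ) (ℓ : Fin n) :
    wgt t x α (Node.a i v) (Node.b ℓ) = if t ℓ i = v then 1 else 0 := by rw [wgt]

lemma wgt_ba (t : Fin n → Fin m → ℝ) (x : Fin m → ℝ) (α : ℝ) (i : Fin m) (v : ℝ) (ℓ : Fin n) :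
    wgt t x α (Node.b ℓ) (Node.a i v) = if t ℓ i = v then ⊤ else 0 := by rw [wgt]

lemma wgt_sa (t : Fin n → Fin m → ℝ) (x : Fin m → ℝ) (α : ℝ) (i : Fin m) (v : ℝ) :
    wgt t x α Node.src (Node.a i v) = if v = x i then ⊤ else 0 := by rw [wgt]

lemma ite_add_zero' {P : Prop} [Decidable P] (a b : ℝ≥0∞) :
    (if P then a + b else 0) = (if P then a else 0) + (if P then b else 0) := by
  split <;> simp

lemma up_bound (t : Fin n → Fin m → ℝ) (x : Fin m → ℝ) (α : ℝ)
    (S : Finset (Fin n)) (hS : S.Nonempty) (i : Fin m) (u : ℝ) (hu : u ∈ vals t i) :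
    ((∑ v ∈ vals t i, if (Node.a i u ∈ XS t S ∧ Node.a i v ∉ XS t S)
        then (if Consecutive t i u v ∧ x i < v
          then ENNReal.ofReal ((n : ℝ) - (cnt t i u : ℝ) + ((m : ℝ) / α) * (u - x i)) else 0)
        else 0)
      + (if (Node.a i u ∈ XS t S ∧ (Node.snk : Node n m) ∉ XS t S)
        then (if (u ∈ vals t i ∧ ∀ w ∈ vals t i, w ≤ u)
          then ENNReal.ofReal (((m : ℝ) / α) * (u - x i)) else 0) else 0))
    ≤ if u = hiF t S i then
        ENNReal.ofReal ((n : ℝ) - (cnt t i (hiF t S i) : ℝ)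
          + ((m : ℝ) / α) * (hiF t S i - x i)) else 0 := by
  classical
  have hi_mem : hiF t S i ∈ vals t i := hiF_mem_vals t hS i
  by_cases hcase : u = hiF t S i
  · rw [if_pos hcase, ← hcase]
    by_cases hex : ∃ w ∈ vals t i, u < w
    · obtain ⟨w, hwm, hww⟩ := hex
      obtain ⟨v₀, hcon, -⟩ := exists_succ hu hwm hww
      have hsnk : ¬ (u ∈ vals t i ∧ ∀ w' ∈ vals t i, w' ≤ u) :=
        fun hc => absurd (hc.2 w hwm) (not_le.mpr hww)
      rw [if_neg hsnk, ite_self, add_zero]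
      calc ∑ v ∈ vals t i, _ ≤ ∑ v ∈ vals t i,
            (if v = v₀ then ENNReal.ofReal ((n : ℝ) - (cnt t i u : ℝ)
              + ((m : ℝ) / α) * (u - x i)) else 0) := by
              apply Finset.sum_le_sum
              intro v hv
              by_cases hv0 : v = v₀
              · rw [if_pos hv0]
                split_ifs with h1 h2
                · exact le_rfl
                · exact zero_le
                · exact zero_le
              · rw [if_neg hv0]
                split_ifs with h1 h2
                · exact absurd (succ_unique h2.1 hcon) hv0
                · exact le_rfl
                · exact le_rfl
        _ = _ := by rw [Finset.sum_ite_eq' (vals t i) v₀, if_pos hcon.2.1]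
    · push_neg at hex
      have hsum : (∑ v ∈ vals t i, if (Node.a i u ∈ XS t S ∧ Node.a i v ∉ XS t S)
          then (if Consecutive t i u v ∧ x i < v
            then ENNReal.ofReal ((n : ℝ) - (cnt t i u : ℝ) + ((m : ℝ) / α) * (u - x i)) else 0)
          else 0) = 0 := by
        apply Finset.sum_eq_zero
        intro v hv
        split_ifs with h1 h2
        · exact absurd (hex v h2.1.2.1) (not_le.mpr h2.1.2.2.1)
        · rfl
        · rfl
      rw [hsum, zero_add]
      split_ifs with h1 h2
      · apply ENNReal.ofReal_le_ofReal
        have := cnt_le_n t i u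
        have h3 : (cnt t i u : ℝ) ≤ (n : ℝ) := by exact_mod_cast this
        linarith
      · exact zero_le
      · exact zero_le
  · rw [if_neg hcase]
    apply le_of_eq
    rw [add_eq_zero]
    constructor
    · apply Finset.sum_eq_zero
      intro v hv
      split_ifs with h1 h2
      · exfalso
        rw [mem_XS_a] at h1
        have huv : u < v := h2.1.2.2.1
        have hvhi : hiF t S i < v := by
          by_contra hle
          exact (h1.2 : ¬ _) (mem_XS_a.mpr ⟨le_trans h1.1.1 (le_of_lt huv), not_lt.mp hle⟩)
        rcases eq_or_lt_of_le h1.1.2 with heq | hlt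
        · exact hcase heq
        · exact h2.1.2.2.2 (hiF t S i) hi_mem ⟨hlt, hvhi⟩
      · rfl
      · rfl
    · split_ifs with h1 h2
      · exfalso
        rw [mem_XS_a] at h1
        exact hcase (le_antisymm h1.1.2 (h2.2 (hiF t S i) hi_mem))
      · rfl
      · rfl

lemma down_bound (t : Fin n → Fin m → ℝ) (x : Fin m → ℝ) (α : ℝ)
    (S : Finset (Fin n)) (hS : S.Nonempty) (i : Fin m) (u : ℝ) (hu : u ∈ vals t i) :
    ((∑ v ∈ vals t i, if (Node.a i u ∈ XS t S ∧ Node.a i v ∉ XS t S)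
        then (if Consecutive t i v u ∧ v < x i
          then ENNReal.ofReal ((cnt t i v : ℝ) + ((m : ℝ) / α) * (x i - u)) else 0)
        else 0)
      + (if (Node.a i u ∈ XS t S ∧ (Node.snk : Node n m) ∉ XS t S)
        then (if (u ∈ vals t i ∧ ∀ w ∈ vals t i, u ≤ w)
          then ENNReal.ofReal (((m : ℝ) / α) * (x i - u)) else 0) else 0))
    ≤ if u = loF t S i then
        ENNReal.ofReal ((Nlt t i (loF t S i) : ℝ)
          + ((m : ℝ) / α) * (x i - loF t S i)) else 0 := by
  classical
  have lo_mem : loF t S i ∈ vals t i := loF_mem_vals t hS i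
  by_cases hcase : u = loF t S i
  · rw [if_pos hcase, ← hcase]
    by_cases hex : ∃ w ∈ vals t i, w < u
    · obtain ⟨w, hwm, hww⟩ := hex
      obtain ⟨v₀, hcon, -⟩ := exists_pred hu hwm hww
      have hsnk : ¬ (u ∈ vals t i ∧ ∀ w' ∈ vals t i, u ≤ w') :=
        fun hc => absurd (hc.2 w hwm) (not_le.mpr hww)
      rw [if_neg hsnk, ite_self, add_zero]
      calc ∑ v ∈ vals t i, _ ≤ ∑ v ∈ vals t i,
            (if v = v₀ then ENNReal.ofReal ((Nlt t i u : ℝ)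
              + ((m : ℝ) / α) * (x i - u)) else 0) := by
              apply Finset.sum_le_sum
              intro v hv
              by_cases hv0 : v = v₀
              · rw [if_pos hv0]
                split_ifs with h1 h2
                · subst hv0
                  rw [cnt_pred hcon]
                · exact zero_le
                · exact zero_le
              · rw [if_neg hv0]
                split_ifs with h1 h2
                · exact absurd (pred_unique h2.1 hcon) hv0
                · exact le_rfl
                · exact le_rfl
        _ = _ := by rw [Finset.sum_ite_eq' (vals t i) v₀, if_pos hcon.1]
    · push_neg at hex
      have hsum : (∑ v ∈ vals t i, if (Node.a i u ∈ XS t S ∧ Node.a i v ∉ XS t S)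
          then (if Consecutive t i v u ∧ v < x i
            then ENNReal.ofReal ((cnt t i v : ℝ) + ((m : ℝ) / α) * (x i - u)) else 0)
          else 0) = 0 := by
        apply Finset.sum_eq_zero
        intro v hv
        split_ifs with h1 h2
        · exact absurd (hex v h2.1.1) (not_le.mpr h2.1.2.2.1)
        · rfl
        · rfl
      rw [hsum, zero_add]
      split_ifs with h1 h2
      · apply ENNReal.ofReal_le_ofReal
        have h3 : (0 : ℝ) ≤ (Nlt t i u : ℝ) := Nat.cast_nonneg _
        linarith
      · exact zero_le
      · exact zero_le
  · rw [if_neg hcase]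
    apply le_of_eq
    rw [add_eq_zero]
    constructor
    · apply Finset.sum_eq_zero
      intro v hv
      split_ifs with h1 h2
      · exfalso
        rw [mem_XS_a] at h1
        have hvu : v < u := h2.1.2.2.1
        have hvlo : v < loF t S i := by
          by_contra hle
          exact (h1.2 : ¬ _) (mem_XS_a.mpr ⟨not_lt.mp hle, le_trans (le_of_lt hvu) h1.1.2⟩)
        rcases eq_or_lt_of_le h1.1.1 with heq | hlt
        · exact hcase heq.symm
        · exact h2.1.2.2.2 (loF t S i) lo_mem ⟨hvlo, hlt⟩
      · rfl
      · rfl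
    · split_ifs with h1 h2
      · exfalso
        rw [mem_XS_a] at h1
        exact hcase (le_antisymm (h2.2 (loF t S i) lo_mem) h1.1.1)
      · rfl
      · rfl

lemma rowsum_le (t : Fin n → Fin m → ℝ) (x : Fin m → ℝ) (α : ℝ)
    (S : Finset (Fin n)) (hS : S.Nonempty) (i : Fin m) :
    ((∑ u ∈ vals t i, ∑ v ∈ vals t i, cf t x α (XS t S) (Node.a i u) (Node.a i v))
      + ∑ v ∈ vals t i, cf t x α (XS t S) (Node.a i v) Node.snk)
    ≤ ENNReal.ofReal ((n : ℝ) - (cnt t i (hiF t S i) : ℝ)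
          + ((m : ℝ) / α) * (hiF t S i - x i))
      + ENNReal.ofReal ((Nlt t i (loF t S i) : ℝ)
          + ((m : ℝ) / α) * (x i - loF t S i)) := by
  classical
  rw [← Finset.sum_add_distrib]
  have hrow : ∀ u ∈ vals t i,
      ((∑ v ∈ vals t i, cf t x α (XS t S) (Node.a i u) (Node.a i v))
        + cf t x α (XS t S) (Node.a i u) Node.snk)
      ≤ (if u = hiF t S i then
          ENNReal.ofReal ((n : ℝ) - (cnt t i (hiF t S i) : ℝ)
            + ((m : ℝ) / α) * (hiF t S i - x i)) else 0)
        + (if u = loF t S i then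
          ENNReal.ofReal ((Nlt t i (loF t S i) : ℝ)
            + ((m : ℝ) / α) * (x i - loF t S i)) else 0) := by
    intro u hu
    have hAA : ∀ v, cf t x α (XS t S) (Node.a i u) (Node.a i v) =
        (if (Node.a i u ∈ XS t S ∧ Node.a i v ∉ XS t S)
          then (if Consecutive t i u v ∧ x i < v
            then ENNReal.ofReal ((n : ℝ) - (cnt t i u : ℝ) + ((m : ℝ) / α) * (u - x i)) else 0)
          else 0)
        + (if (Node.a i u ∈ XS t S ∧ Node.a i v ∉ XS t S)
          then (if Consecutive t i v u ∧ v < x i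
            then ENNReal.ofReal ((cnt t i v : ℝ) + ((m : ℝ) / α) * (x i - u)) else 0)
          else 0) := by
      intro v
      rw [cf, wgt_aa, ite_add_zero']
    have hAS : cf t x α (XS t S) (Node.a i u) Node.snk =
        (if (Node.a i u ∈ XS t S ∧ (Node.snk : Node n m) ∉ XS t S)
          then (if (u ∈ vals t i ∧ ∀ w ∈ vals t i, w ≤ u)
            then ENNReal.ofReal (((m : ℝ) / α) * (u - x i)) else 0) else 0)
        + (if (Node.a i u ∈ XS t S ∧ (Node.snk : Node n m) ∉ XS t S)
          then (if (u ∈ vals t i ∧ ∀ w ∈ vals t i, u ≤ w)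
            then ENNReal.ofReal (((m : ℝ) / α) * (x i - u)) else 0) else 0) := by
      rw [cf, wgt_as, ite_add_zero']
    calc ((∑ v ∈ vals t i, cf t x α (XS t S) (Node.a i u) (Node.a i v))
          + cf t x α (XS t S) (Node.a i u) Node.snk)
        = ((∑ v ∈ vals t i, if (Node.a i u ∈ XS t S ∧ Node.a i v ∉ XS t S)
            then (if Consecutive t i u v ∧ x i < v
              then ENNReal.ofReal ((n : ℝ) - (cnt t i u : ℝ) + ((m : ℝ) / α) * (u - x i)) else 0)
            else 0)
          + (if (Node.a i u ∈ XS t S ∧ (Node.snk : Node n m) ∉ XS t S)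
            then (if (u ∈ vals t i ∧ ∀ w ∈ vals t i, w ≤ u)
              then ENNReal.ofReal (((m : ℝ) / α) * (u - x i)) else 0) else 0))
        + ((∑ v ∈ vals t i, if (Node.a i u ∈ XS t S ∧ Node.a i v ∉ XS t S)
            then (if Consecutive t i v u ∧ v < x i
              then ENNReal.ofReal ((cnt t i v : ℝ) + ((m : ℝ) / α) * (x i - u)) else 0)
            else 0)
          + (if (Node.a i u ∈ XS t S ∧ (Node.snk : Node n m) ∉ XS t S)
            then (if (u ∈ vals t i ∧ ∀ w ∈ vals t i, u ≤ w)
              then ENNReal.ofReal (((m : ℝ) / α) * (x i - u)) else 0) else 0)) := by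
          rw [Finset.sum_congr rfl (fun v _ => hAA v), Finset.sum_add_distrib, hAS]
          exact add_add_add_comm _ _ _ _
      _ ≤ _ := add_le_add (up_bound t x α S hS i u hu) (down_bound t x α S hS i u hu)
  calc ∑ u ∈ vals t i, ((∑ v ∈ vals t i, cf t x α (XS t S) (Node.a i u) (Node.a i v))
        + cf t x α (XS t S) (Node.a i u) Node.snk)
      ≤ ∑ u ∈ vals t i, ((if u = hiF t S i then
          ENNReal.ofReal ((n : ℝ) - (cnt t i (hiF t S i) : ℝ)
            + ((m : ℝ) / α) * (hiF t S i - x i)) else 0)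
        + (if u = loF t S i then
          ENNReal.ofReal ((Nlt t i (loF t S i) : ℝ)
            + ((m : ℝ) / α) * (x i - loF t S i)) else 0)) := Finset.sum_le_sum hrow
    _ = _ := by
        rw [Finset.sum_add_distrib, Finset.sum_ite_eq' (vals t i), Finset.sum_ite_eq' (vals t i),
          if_pos (hiF_mem_vals t hS i), if_pos (loF_mem_vals t hS i)]

lemma count_partition (t : Fin n → Fin m → ℝ) (S : Finset (Fin n)) (hS : S.Nonempty) (i : Fin m) :
    (Finset.univ.filter fun ℓ => hiF t S i < t ℓ i).card
    + Nlt t i (loF t S i)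
    + (Finset.univ.filter fun ℓ => ℓ ∉ S ∧ loF t S i ≤ t ℓ i ∧ t ℓ i ≤ hiF t S i).card
    + S.card = n := by
  classical
  set A1 := Finset.univ.filter fun ℓ => hiF t S i < t ℓ i with hA1
  set A2 := Finset.univ.filter fun ℓ : Fin n => t ℓ i < loF t S i with hA2
  set A3 := Finset.univ.filter
    (fun ℓ => ℓ ∉ S ∧ loF t S i ≤ t ℓ i ∧ t ℓ i ≤ hiF t S i) with hA3
  have hNlt : Nlt t i (loF t S i) = A2.card := rfl
  have d12 : Disjoint A1 A2 := by
    rw [Finset.disjoint_left]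
    intro ℓ h1 h2
    rw [hA1, Finset.mem_filter] at h1
    rw [hA2, Finset.mem_filter] at h2
    linarith [loF_le_hiF t hS i]
  have d3 : Disjoint (A1 ∪ A2) A3 := by
    rw [Finset.disjoint_left]
    intro ℓ h1 h2
    rw [hA3, Finset.mem_filter] at h2
    rcases Finset.mem_union.mp h1 with h | h
    · rw [hA1, Finset.mem_filter] at h
      linarith [h2.2.2.2, h.2]
    · rw [hA2, Finset.mem_filter] at h
      linarith [h2.2.2.1, h.2]
  have dS : Disjoint ((A1 ∪ A2) ∪ A3) S := by
    rw [Finset.disjoint_left]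
    intro ℓ h1 h2
    rcases Finset.mem_union.mp h1 with h | h
    · rcases Finset.mem_union.mp h with h' | h'
      · rw [hA1, Finset.mem_filter] at h'
        linarith [le_hiF t hS i h2, h'.2]
      · rw [hA2, Finset.mem_filter] at h'
        linarith [loF_le t hS i h2, h'.2]
    · rw [hA3, Finset.mem_filter] at h
      exact h.2.1 h2
  have hunion : ((A1 ∪ A2) ∪ A3) ∪ S = Finset.univ := by
    ext ℓ
    simp only [Finset.mem_union, hA1, hA2, hA3, Finset.mem_filter, Finset.mem_univ, true_and,
      iff_true]
    by_cases hs : ℓ ∈ S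
    · exact Or.inr hs
    · by_cases h1 : hiF t S i < t ℓ i
      · exact Or.inl (Or.inl (Or.inl h1))
      · by_cases h2 : t ℓ i < loF t S i
        · exact Or.inl (Or.inl (Or.inr h2))
        · exact Or.inl (Or.inr ⟨hs, not_lt.mp h2, not_lt.mp h1⟩)
  have h1 : (A1 ∪ A2).card = A1.card + A2.card := Finset.card_union_of_disjoint d12
  have h2 : ((A1 ∪ A2) ∪ A3).card = (A1 ∪ A2).card + A3.card := Finset.card_union_of_disjoint d3
  have h3 : (((A1 ∪ A2) ∪ A3) ∪ S).card = ((A1 ∪ A2) ∪ A3).card + S.card :=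
    Finset.card_union_of_disjoint dS
  rw [hNlt]
  calc A1.card + A2.card + A3.card + S.card = (((A1 ∪ A2) ∪ A3) ∪ S).card := by
        rw [h3, h2, h1]
    _ = n := by rw [hunion]; simp

lemma cutVal_XS_le (t : Fin n → Fin m → ℝ) (x : Fin m → ℝ) (α : ℝ) (hα : 0 < α)
    (S : Finset (Fin n)) (hS : S.Nonempty)
    (hx : ∀ i, loF t S i ≤ x i ∧ x i ≤ hiF t S i) :
    cutVal t x α (XS t S) ≤ ENNReal.ofReal ((n : ℝ) * (m : ℝ)
      + ((m : ℝ) / α) * ((∑ i : Fin m, (hiF t S i - loF t S i)) - α * S.card)) := by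
  classical
  rw [cutVal_pieces]
  have hP2 : (∑ i : Fin m, cf t x α (XS t S) Node.src (Node.a i (x i))) = 0 := by
    apply Finset.sum_eq_zero; intro i _
    rw [cf, if_neg]
    rintro ⟨-, hb⟩
    exact hb (mem_XS_a.mpr (hx i))
  have hP5 : (∑ i : Fin m, ∑ ℓ : Fin n, cf t x α (XS t S) (Node.b ℓ) (Node.a i (t ℓ i))) = 0 := by
    apply Finset.sum_eq_zero; intro i _
    apply Finset.sum_eq_zero; intro ℓ _
    rw [cf, if_neg]
    rintro ⟨ha, hb⟩
    exact hb (mem_XS_a.mpr ⟨loF_le t hS i (mem_XS_b.mp ha), le_hiF t hS i (mem_XS_b.mp ha)⟩)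
  have hP4 : ∀ i : Fin m, (∑ ℓ : Fin n, cf t x α (XS t S) (Node.a i (t ℓ i)) (Node.b ℓ))
      = (((Finset.univ.filter fun ℓ => ℓ ∉ S ∧ loF t S i ≤ t ℓ i ∧ t ℓ i ≤ hiF t S i)).card
          : ℝ≥0∞) := by
    intro i
    have heq : ∀ ℓ : Fin n, cf t x α (XS t S) (Node.a i (t ℓ i)) (Node.b ℓ)
        = (if (ℓ ∉ S ∧ loF t S i ≤ t ℓ i ∧ t ℓ i ≤ hiF t S i) then (1 : ℝ≥0∞) else 0) := by
      intro ℓ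
      rw [cf, wgt_ab, if_pos rfl]
      apply if_congr _ rfl rfl
      constructor
      · rintro ⟨ha, hb⟩
        exact ⟨fun hmem => hb (mem_XS_b.mpr hmem), (mem_XS_a.mp ha).1, (mem_XS_a.mp ha).2⟩
      · rintro ⟨h1, h2, h3⟩
        exact ⟨mem_XS_a.mpr ⟨h2, h3⟩, fun hb => h1 (mem_XS_b.mp hb)⟩
    rw [Finset.sum_congr rfl (fun ℓ _ => heq ℓ), Finset.sum_boole]
  rw [hP2, hP5, add_zero, add_zero, Finset.sum_congr rfl (fun i _ => hP4 i),
    ← Finset.sum_add_distrib, ← Finset.sum_add_distrib]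
  have hper : ∀ i : Fin m,
      ((∑ u ∈ vals t i, ∑ v ∈ vals t i, cf t x α (XS t S) (Node.a i u) (Node.a i v))
        + ∑ v ∈ vals t i, cf t x α (XS t S) (Node.a i v) Node.snk)
        + (((Finset.univ.filter fun ℓ => ℓ ∉ S ∧ loF t S i ≤ t ℓ i ∧ t ℓ i ≤ hiF t S i)).card
          : ℝ≥0∞)
      ≤ ENNReal.ofReal ((n : ℝ) - S.card + ((m : ℝ) / α) * (hiF t S i - loF t S i)) := by
    intro i
    refine le_trans (add_le_add_left (rowsum_le t x α S hS i) _) (le_of_eq ?_)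
    have hnn1 : (0 : ℝ) ≤ (n : ℝ) - (cnt t i (hiF t S i) : ℝ)
        + ((m : ℝ) / α) * (hiF t S i - x i) := by
      have hc : (cnt t i (hiF t S i) : ℝ) ≤ (n : ℝ) := by exact_mod_cast cnt_le_n t i _
      have hd : (0 : ℝ) ≤ ((m : ℝ) / α) := div_nonneg (Nat.cast_nonneg _) hα.le
      nlinarith [(hx i).2]
    have hnn2 : (0 : ℝ) ≤ (Nlt t i (loF t S i) : ℝ)
        + ((m : ℝ) / α) * (x i - loF t S i) := by
      have hd : (0 : ℝ) ≤ ((m : ℝ) / α) := div_nonneg (Nat.cast_nonneg _) hα.le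
      have hn : (0 : ℝ) ≤ (Nlt t i (loF t S i) : ℝ) := Nat.cast_nonneg _
      nlinarith [(hx i).1]
    rw [← ENNReal.ofReal_natCast
      ((Finset.univ.filter fun ℓ => ℓ ∉ S ∧ loF t S i ≤ t ℓ i ∧ t ℓ i ≤ hiF t S i)).card,
      ← ENNReal.ofReal_add hnn1 hnn2, ← ENNReal.ofReal_add (add_nonneg hnn1 hnn2)
        (Nat.cast_nonneg _)]
    congr 1
    have hcnt := cnt_add_gt t i (hiF t S i)
    have hpart := count_partition t S hS i
    have hcnt' : (cnt t i (hiF t S i) : ℝ)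
        + ((Finset.univ.filter fun ℓ => hiF t S i < t ℓ i).card : ℝ) = (n : ℝ) := by
      exact_mod_cast hcnt
    have hpart' : ((Finset.univ.filter fun ℓ => hiF t S i < t ℓ i).card : ℝ)
        + (Nlt t i (loF t S i) : ℝ)
        + (((Finset.univ.filter fun ℓ => ℓ ∉ S ∧ loF t S i ≤ t ℓ i ∧ t ℓ i ≤ hiF t S i)).card : ℝ)
        + (S.card : ℝ) = (n : ℝ) := by exact_mod_cast hpart
    have hring : ((m : ℝ) / α) * (hiF t S i - x i) + ((m : ℝ) / α) * (x i - loF t S i)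
        = ((m : ℝ) / α) * (hiF t S i - loF t S i) := by ring
    linarith
  refine le_trans (Finset.sum_le_sum fun i _ => hper i) (le_of_eq ?_)
  have hnn : ∀ i ∈ (Finset.univ : Finset (Fin m)),
      (0 : ℝ) ≤ (n : ℝ) - S.card + ((m : ℝ) / α) * (hiF t S i - loF t S i) := by
    intro i _
    have hc : (S.card : ℝ) ≤ (n : ℝ) := by
      exact_mod_cast (Finset.card_le_univ S).trans_eq (by simp)
    have hd : (0 : ℝ) ≤ ((m : ℝ) / α) := div_nonneg (Nat.cast_nonneg _) hα.le
    nlinarith [loF_le_hiF t hS i]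
  rw [← ENNReal.ofReal_sum_of_nonneg hnn]
  congr 1
  rw [Finset.sum_add_distrib, Finset.sum_const, ← Finset.mul_sum]
  have hcard : ((Finset.univ : Finset (Fin m)).card : ℝ) = (m : ℝ) := by simp
  have hα' : α ≠ 0 := ne_of_gt hα
  field_simp
  rw [Finset.card_univ, Fintype.card_fin, nsmul_eq_mul]; ring

lemma cf_aa_split (t : Fin n → Fin m → ℝ) (x : Fin m → ℝ) (α : ℝ) (X : Set (Node n m))
    (i : Fin m) (u v : ℝ) :
    cf t x α X (Node.a i u) (Node.a i v) =
      (if (Node.a i u ∈ X ∧ Node.a i v ∉ X)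
        then (if Consecutive t i u v ∧ x i < v
          then ENNReal.ofReal ((n : ℝ) - (cnt t i u : ℝ) + ((m : ℝ) / α) * (u - x i)) else 0)
        else 0)
      + (if (Node.a i u ∈ X ∧ Node.a i v ∉ X)
        then (if Consecutive t i v u ∧ v < x i
          then ENNReal.ofReal ((cnt t i v : ℝ) + ((m : ℝ) / α) * (x i - u)) else 0)
        else 0) := by
  rw [cf, wgt_aa, ite_add_zero']

lemma cf_as_split (t : Fin n → Fin m → ℝ) (x : Fin m → ℝ) (α : ℝ) (X : Set (Node n m))
    (i : Fin m) (u : ℝ) :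
    cf t x α X (Node.a i u) Node.snk =
      (if (Node.a i u ∈ X ∧ (Node.snk : Node n m) ∉ X)
        then (if (u ∈ vals t i ∧ ∀ w ∈ vals t i, w ≤ u)
          then ENNReal.ofReal (((m : ℝ) / α) * (u - x i)) else 0) else 0)
      + (if (Node.a i u ∈ X ∧ (Node.snk : Node n m) ∉ X)
        then (if (u ∈ vals t i ∧ ∀ w ∈ vals t i, u ≤ w)
          then ENNReal.ofReal (((m : ℝ) / α) * (x i - u)) else 0) else 0) := by
  rw [cf, wgt_as, ite_add_zero']

lemma cnt_eq_n {t : Fin n → Fin m → ℝ} {i : Fin m} {u : ℝ}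
    (h : ∀ w ∈ vals t i, w ≤ u) : cnt t i u = n := by
  rw [cnt, Finset.filter_true_of_mem (fun ℓ _ => h (t ℓ i) (mem_vals t ℓ i))]
  simp

lemma nlt_eq_zero {t : Fin n → Fin m → ℝ} {i : Fin m} {u : ℝ}
    (h : ∀ w ∈ vals t i, u ≤ w) : Nlt t i u = 0 := by
  rw [Nlt, Finset.card_eq_zero, Finset.filter_eq_empty_iff]
  intro ℓ _
  exact not_lt.mpr (h (t ℓ i) (mem_vals t ℓ i))

lemma up_low (t : Fin n → Fin m → ℝ) (x : Fin m → ℝ) (α : ℝ) (X : Set (Node n m))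
    (hsnk : (Node.snk : Node n m) ∉ X) (i : Fin m) (u : ℝ) (hu : u ∈ vals t i)
    (hux : x i ≤ u) (huX : Node.a i u ∈ X)
    (hnab : ∀ v ∈ vals t i, Consecutive t i u v → Node.a i v ∉ X) :
    ENNReal.ofReal ((n : ℝ) - (cnt t i u : ℝ) + ((m : ℝ) / α) * (u - x i)) ≤
      (∑ v ∈ vals t i, if (Node.a i u ∈ X ∧ Node.a i v ∉ X)
        then (if Consecutive t i u v ∧ x i < v
          then ENNReal.ofReal ((n : ℝ) - (cnt t i u : ℝ) + ((m : ℝ) / α) * (u - x i)) else 0)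
        else 0)
      + (if (Node.a i u ∈ X ∧ (Node.snk : Node n m) ∉ X)
        then (if (u ∈ vals t i ∧ ∀ w ∈ vals t i, w ≤ u)
          then ENNReal.ofReal (((m : ℝ) / α) * (u - x i)) else 0) else 0) := by
  classical
  by_cases hex : ∃ w ∈ vals t i, u < w
  · obtain ⟨w, hwm, hww⟩ := hex
    obtain ⟨v₀, hcon, -⟩ := exists_succ hu hwm hww
    refine le_trans ?_ (le_add_right (Finset.single_le_sum (f := fun v =>
      if (Node.a i u ∈ X ∧ Node.a i v ∉ X)
        then (if Consecutive t i u v ∧ x i < v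
          then ENNReal.ofReal ((n : ℝ) - (cnt t i u : ℝ) + ((m : ℝ) / α) * (u - x i)) else 0)
        else 0) (fun v _ => zero_le) hcon.2.1))
    beta_reduce
    rw [if_pos ⟨huX, hnab v₀ hcon.2.1 hcon⟩, if_pos ⟨hcon, lt_of_le_of_lt hux hcon.2.2.1⟩]
  · push_neg at hex
    have hcnt : cnt t i u = n := cnt_eq_n hex
    have : ENNReal.ofReal ((n : ℝ) - (cnt t i u : ℝ) + ((m : ℝ) / α) * (u - x i))
        = ENNReal.ofReal (((m : ℝ) / α) * (u - x i)) := by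
      rw [hcnt]
      norm_num
    rw [this]
    refine le_add_left (le_of_eq ?_)
    rw [if_pos ⟨huX, hsnk⟩, if_pos ⟨hu, hex⟩]

lemma down_low (t : Fin n → Fin m → ℝ) (x : Fin m → ℝ) (α : ℝ) (X : Set (Node n m))
    (hsnk : (Node.snk : Node n m) ∉ X) (i : Fin m) (u : ℝ) (hu : u ∈ vals t i)
    (hux : u ≤ x i) (huX : Node.a i u ∈ X)
    (hnab : ∀ v ∈ vals t i, Consecutive t i v u → Node.a i v ∉ X) :
    ENNReal.ofReal ((Nlt t i u : ℝ) + ((m : ℝ) / α) * (x i - u)) ≤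
      (∑ v ∈ vals t i, if (Node.a i u ∈ X ∧ Node.a i v ∉ X)
        then (if Consecutive t i v u ∧ v < x i
          then ENNReal.ofReal ((cnt t i v : ℝ) + ((m : ℝ) / α) * (x i - u)) else 0)
        else 0)
      + (if (Node.a i u ∈ X ∧ (Node.snk : Node n m) ∉ X)
        then (if (u ∈ vals t i ∧ ∀ w ∈ vals t i, u ≤ w)
          then ENNReal.ofReal (((m : ℝ) / α) * (x i - u)) else 0) else 0) := by
  classical
  by_cases hex : ∃ w ∈ vals t i, w < u
  · obtain ⟨w, hwm, hww⟩ := hex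
    obtain ⟨v₀, hcon, -⟩ := exists_pred hu hwm hww
    refine le_trans ?_ (le_add_right (Finset.single_le_sum (f := fun v =>
      if (Node.a i u ∈ X ∧ Node.a i v ∉ X)
        then (if Consecutive t i v u ∧ v < x i
          then ENNReal.ofReal ((cnt t i v : ℝ) + ((m : ℝ) / α) * (x i - u)) else 0)
        else 0) (fun v _ => zero_le) hcon.1))
    beta_reduce
    rw [if_pos ⟨huX, hnab v₀ hcon.1 hcon⟩, if_pos ⟨hcon, lt_of_lt_of_le hcon.2.2.1 hux⟩,
      cnt_pred hcon]
  · push_neg at hex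
    have hcnt : Nlt t i u = 0 := nlt_eq_zero hex
    have : ENNReal.ofReal ((Nlt t i u : ℝ) + ((m : ℝ) / α) * (x i - u))
        = ENNReal.ofReal (((m : ℝ) / α) * (x i - u)) := by
      rw [hcnt]
      norm_num
    rw [this]
    refine le_add_left (le_of_eq ?_)
    rw [if_pos ⟨huX, hsnk⟩, if_pos ⟨hu, hex⟩]

lemma per_coord_low (t : Fin n → Fin m → ℝ) (x : Fin m → ℝ) (α : ℝ) (hα : 0 < α)
    (X : Set (Node n m)) (hsnk : (Node.snk : Node n m) ∉ X) (i : Fin m)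
    (hax : Node.a i (x i) ∈ X) (hxv : x i ∈ vals t i)
    (U : Finset (Fin n)) (hUne : U.Nonempty)
    (hU : ∀ ℓ : Fin n, ℓ ∈ U ↔ Node.b ℓ ∈ X)
    (hUa : ∀ ℓ ∈ U, Node.a i (t ℓ i) ∈ X) :
    ENNReal.ofReal ((n : ℝ) - U.card + ((m : ℝ) / α) * (hiF t U i - loF t U i))
      ≤ ((∑ u ∈ vals t i, ∑ v ∈ vals t i, cf t x α X (Node.a i u) (Node.a i v))
        + ∑ v ∈ vals t i, cf t x α X (Node.a i v) Node.snk)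
        + ∑ ℓ : Fin n, cf t x α X (Node.a i (t ℓ i)) (Node.b ℓ) := by
  classical
  set A := (vals t i).filter (fun v => Node.a i v ∈ X) with hAdef
  have hxA : x i ∈ A := Finset.mem_filter.mpr ⟨hxv, hax⟩
  have hAne : A.Nonempty := ⟨x i, hxA⟩
  set h := A.max' hAne with hhdef
  set l := A.min' hAne with hldef
  have hmemA : h ∈ A := A.max'_mem hAne
  have lmemA : l ∈ A := A.min'_mem hAne
  have hvals : h ∈ vals t i := (Finset.mem_filter.mp hmemA).1
  have hXX : Node.a i h ∈ X := (Finset.mem_filter.mp hmemA).2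
  have lvals : l ∈ vals t i := (Finset.mem_filter.mp lmemA).1
  have lXX : Node.a i l ∈ X := (Finset.mem_filter.mp lmemA).2
  have hxh : x i ≤ h := A.le_max' _ hxA
  have hlx : l ≤ x i := A.min'_le _ hxA
  have hUA : ∀ ℓ ∈ U, t ℓ i ∈ A :=
    fun ℓ hℓ => Finset.mem_filter.mpr ⟨mem_vals t ℓ i, hUa ℓ hℓ⟩
  have hhiU : hiF t U i ≤ h := by
    obtain ⟨ℓ, hℓ, he⟩ := hiF_mem t hUne i
    rw [← he]
    exact A.le_max' _ (hUA ℓ hℓ)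
  have hloU : l ≤ loF t U i := by
    obtain ⟨ℓ, hℓ, he⟩ := loF_mem t hUne i
    rw [← he]
    exact A.min'_le _ (hUA ℓ hℓ)
  set Bp := Finset.univ.filter
    (fun ℓ => ℓ ∉ U ∧ x i < t ℓ i ∧ t ℓ i ≤ h ∧ Node.a i (t ℓ i) ∉ X) with hBpdef
  set Bm := Finset.univ.filter
    (fun ℓ => ℓ ∉ U ∧ l ≤ t ℓ i ∧ t ℓ i < x i ∧ Node.a i (t ℓ i) ∉ X) with hBmdef
  set G := Finset.univ.filter (fun ℓ => ℓ ∉ U ∧ Node.a i (t ℓ i) ∈ X) with hGdef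
  set UpE := (vals t i).filter (fun u => x i ≤ u ∧ Node.a i u ∈ X ∧
    ∀ v ∈ vals t i, Consecutive t i u v → Node.a i v ∉ X) with hUpEdef
  set DnE := (vals t i).filter (fun u => u ≤ x i ∧ Node.a i u ∈ X ∧
    ∀ v ∈ vals t i, Consecutive t i v u → Node.a i v ∉ X) with hDnEdef
  -- the AB piece dominates the number of "good" outside series
  have hAB : ((G.card : ℝ≥0∞)) ≤ ∑ ℓ : Fin n, cf t x α X (Node.a i (t ℓ i)) (Node.b ℓ) := by
    have h1 : ∀ ℓ ∈ G, (1 : ℝ≥0∞) = cf t x α X (Node.a i (t ℓ i)) (Node.b ℓ) := by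
      intro ℓ hℓ
      have hp := (Finset.mem_filter.mp hℓ).2
      rw [cf, if_pos ⟨hp.2, fun hb => hp.1 ((hU ℓ).mpr hb)⟩, wgt_ab, if_pos rfl]
    calc (G.card : ℝ≥0∞) = ∑ ℓ ∈ G, 1 := by simp
      _ = ∑ ℓ ∈ G, cf t x α X (Node.a i (t ℓ i)) (Node.b ℓ) := Finset.sum_congr rfl h1
      _ ≤ _ := Finset.sum_le_sum_of_subset (G.subset_univ)
  -- row-wise lower bound for the chain pieces
  have hrows : (∑ u ∈ UpE, ENNReal.ofReal ((n : ℝ) - (cnt t i u : ℝ)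
        + ((m : ℝ) / α) * (u - x i)))
      + (∑ u ∈ DnE, ENNReal.ofReal ((Nlt t i u : ℝ) + ((m : ℝ) / α) * (x i - u)))
      ≤ (∑ u ∈ vals t i, ∑ v ∈ vals t i, cf t x α X (Node.a i u) (Node.a i v))
        + ∑ v ∈ vals t i, cf t x α X (Node.a i v) Node.snk := by
    rw [← Finset.sum_add_distrib]
    have hUp' : (∑ u ∈ UpE, ENNReal.ofReal ((n : ℝ) - (cnt t i u : ℝ)
        + ((m : ℝ) / α) * (u - x i)))
        = ∑ u ∈ vals t i, (if u ∈ UpE then ENNReal.ofReal ((n : ℝ) - (cnt t i u : ℝ)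
          + ((m : ℝ) / α) * (u - x i)) else 0) := by
      rw [Finset.sum_ite_mem, Finset.inter_eq_right.mpr (Finset.filter_subset _ _)]
    have hDn' : (∑ u ∈ DnE, ENNReal.ofReal ((Nlt t i u : ℝ) + ((m : ℝ) / α) * (x i - u)))
        = ∑ u ∈ vals t i, (if u ∈ DnE then ENNReal.ofReal ((Nlt t i u : ℝ)
          + ((m : ℝ) / α) * (x i - u)) else 0) := by
      rw [Finset.sum_ite_mem, Finset.inter_eq_right.mpr (Finset.filter_subset _ _)]
    rw [hUp', hDn', ← Finset.sum_add_distrib]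
    apply Finset.sum_le_sum
    intro u hu
    have hsplit : (∑ v ∈ vals t i, cf t x α X (Node.a i u) (Node.a i v))
        + cf t x α X (Node.a i u) Node.snk
        = ((∑ v ∈ vals t i, if (Node.a i u ∈ X ∧ Node.a i v ∉ X)
            then (if Consecutive t i u v ∧ x i < v
              then ENNReal.ofReal ((n : ℝ) - (cnt t i u : ℝ) + ((m : ℝ) / α) * (u - x i)) else 0)
            else 0)
          + (if (Node.a i u ∈ X ∧ (Node.snk : Node n m) ∉ X)
            then (if (u ∈ vals t i ∧ ∀ w ∈ vals t i, w ≤ u)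
              then ENNReal.ofReal (((m : ℝ) / α) * (u - x i)) else 0) else 0))
        + ((∑ v ∈ vals t i, if (Node.a i u ∈ X ∧ Node.a i v ∉ X)
            then (if Consecutive t i v u ∧ v < x i
              then ENNReal.ofReal ((cnt t i v : ℝ) + ((m : ℝ) / α) * (x i - u)) else 0)
            else 0)
          + (if (Node.a i u ∈ X ∧ (Node.snk : Node n m) ∉ X)
            then (if (u ∈ vals t i ∧ ∀ w ∈ vals t i, u ≤ w)
              then ENNReal.ofReal (((m : ℝ) / α) * (x i - u)) else 0) else 0)) := by
      rw [Finset.sum_congr rfl (fun v _ => cf_aa_split t x α X i u v),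
        Finset.sum_add_distrib, cf_as_split]
      exact add_add_add_comm _ _ _ _
    rw [hsplit]
    apply add_le_add
    · by_cases hin : u ∈ UpE
      · rw [if_pos hin]
        have hp := (Finset.mem_filter.mp hin).2
        exact up_low t x α X hsnk i u hu hp.1 hp.2.1 hp.2.2
      · rw [if_neg hin]; exact zero_le
    · by_cases hin : u ∈ DnE
      · rw [if_pos hin]
        have hp := (Finset.mem_filter.mp hin).2
        exact down_low t x α X hsnk i u hu hp.1 hp.2.1 hp.2.2
      · rw [if_neg hin]; exact zero_le
  -- h is an up cut edge, l a down cut edge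
  have hUpEh : h ∈ UpE := by
    rw [hUpEdef, Finset.mem_filter]
    exact ⟨hvals, hxh, hXX, fun v hv hcon hvX =>
      absurd (A.le_max' v (Finset.mem_filter.mpr ⟨hv, hvX⟩)) (not_le.mpr hcon.2.2.1)⟩
  have hDnEl : l ∈ DnE := by
    rw [hDnEdef, Finset.mem_filter]
    exact ⟨lvals, hlx, lXX, fun v hv hcon hvX =>
      absurd (A.min'_le v (Finset.mem_filter.mpr ⟨hv, hvX⟩)) (not_le.mpr hcon.2.2.1)⟩
  -- fiber counting: up side
  have hUpSum : ENNReal.ofReal ((n : ℝ) - (cnt t i h : ℝ) + ((m : ℝ) / α) * (h - x i))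
      + ENNReal.ofReal ((Bp.card : ℝ))
      ≤ ∑ u ∈ UpE, ENNReal.ofReal ((n : ℝ) - (cnt t i u : ℝ) + ((m : ℝ) / α) * (u - x i)) := by
    rw [← Finset.add_sum_erase _ _ hUpEh]
    apply add_le_add_right
    set qf : Fin n → ℝ := fun ℓ => if hc : x i < t ℓ i
      then (A.filter (fun z => z < t ℓ i)).max' ⟨x i, Finset.mem_filter.mpr ⟨hxA, hc⟩⟩
      else 0 with hqf
    have hqprop : ∀ ℓ ∈ Bp, qf ℓ ∈ A ∧ qf ℓ < t ℓ i ∧ x i ≤ qf ℓ := by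
      intro ℓ hℓ
      have hp := (Finset.mem_filter.mp hℓ).2
      have hq : qf ℓ = (A.filter (fun z => z < t ℓ i)).max'
          ⟨x i, Finset.mem_filter.mpr ⟨hxA, hp.2.1⟩⟩ := dif_pos hp.2.1
      have hmm := Finset.mem_filter.mp ((A.filter (fun z => z < t ℓ i)).max'_mem
        ⟨x i, Finset.mem_filter.mpr ⟨hxA, hp.2.1⟩⟩)
      refine ⟨by rw [hq]; exact hmm.1, by rw [hq]; exact hmm.2, ?_⟩
      rw [hq]
      exact Finset.le_max' (A.filter (fun z => z < t ℓ i)) (x i)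
        (Finset.mem_filter.mpr ⟨hxA, hp.2.1⟩)
    have hmaps : ∀ ℓ ∈ Bp, qf ℓ ∈ UpE.erase h := by
      intro ℓ hℓ
      have hp := (Finset.mem_filter.mp hℓ).2
      obtain ⟨hqA, hqlt, hxq⟩ := hqprop ℓ hℓ
      refine Finset.mem_erase.mpr ⟨ne_of_lt (lt_of_lt_of_le hqlt hp.2.2.1), ?_⟩
      rw [hUpEdef, Finset.mem_filter]
      refine ⟨(Finset.mem_filter.mp hqA).1, hxq, (Finset.mem_filter.mp hqA).2, ?_⟩
      intro v hv hcon hvX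
      have hq : qf ℓ = (A.filter (fun z => z < t ℓ i)).max'
          ⟨x i, Finset.mem_filter.mpr ⟨hxA, hp.2.1⟩⟩ := dif_pos hp.2.1
      rcases lt_trichotomy v (t ℓ i) with hlt | heq | hgt
      · have hvF : v ∈ A.filter (fun z => z < t ℓ i) :=
          Finset.mem_filter.mpr ⟨Finset.mem_filter.mpr ⟨hv, hvX⟩, hlt⟩
        have hle := Finset.le_max' (A.filter (fun z => z < t ℓ i)) v hvF
        rw [← hq] at hle
        exact absurd (lt_of_lt_of_le hcon.2.2.1 hle) (lt_irrefl _)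
      · exact hp.2.2.2 (heq ▸ hvX)
      · exact hcon.2.2.2 (t ℓ i) (mem_vals t ℓ i) ⟨hqlt, hgt⟩
    have hfib := Finset.card_eq_sum_card_fiberwise hmaps
    have hcast : ENNReal.ofReal ((Bp.card : ℝ))
        = ∑ u ∈ UpE.erase h, ENNReal.ofReal (((Bp.filter (fun ℓ => qf ℓ = u)).card : ℝ)) := by
      rw [← ENNReal.ofReal_sum_of_nonneg (fun _ _ => Nat.cast_nonneg _)]
      congr 1
      rw [hfib]
      push_cast
      rfl
    rw [hcast]
    apply Finset.sum_le_sum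
    intro u hu
    apply ENNReal.ofReal_le_ofReal
    have hup := (Finset.mem_filter.mp (Finset.mem_erase.mp hu).2).2
    have hsubs : Bp.filter (fun ℓ => qf ℓ = u) ⊆ Finset.univ.filter (fun ℓ => u < t ℓ i) := by
      intro ℓ hℓ
      have h1 := Finset.mem_filter.mp hℓ
      obtain ⟨-, hqlt, -⟩ := hqprop ℓ h1.1
      exact Finset.mem_filter.mpr ⟨Finset.mem_univ _, h1.2 ▸ hqlt⟩
    have hcard := Finset.card_le_card hsubs
    have hgt := cnt_add_gt t i u
    have hcard' : ((Bp.filter (fun ℓ => qf ℓ = u)).card : ℝ)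
        ≤ (n : ℝ) - (cnt t i u : ℝ) := by
      have : ((Bp.filter (fun ℓ => qf ℓ = u)).card : ℝ)
          ≤ ((Finset.univ.filter (fun ℓ => u < t ℓ i)).card : ℝ) := by exact_mod_cast hcard
      have h2 : (cnt t i u : ℝ) + ((Finset.univ.filter (fun ℓ => u < t ℓ i)).card : ℝ)
          = (n : ℝ) := by exact_mod_cast hgt
      linarith
    have hd : (0 : ℝ) ≤ ((m : ℝ) / α) * (u - x i) :=
      mul_nonneg (div_nonneg (Nat.cast_nonneg _) hα.le) (sub_nonneg.mpr hup.1)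
    linarith
  -- fiber counting: down side
  have hDnSum : ENNReal.ofReal ((Nlt t i l : ℝ) + ((m : ℝ) / α) * (x i - l))
      + ENNReal.ofReal ((Bm.card : ℝ))
      ≤ ∑ u ∈ DnE, ENNReal.ofReal ((Nlt t i u : ℝ) + ((m : ℝ) / α) * (x i - u)) := by
    rw [← Finset.add_sum_erase _ _ hDnEl]
    apply add_le_add_right
    set qg : Fin n → ℝ := fun ℓ => if hc : t ℓ i < x i
      then (A.filter (fun z => t ℓ i < z)).min' ⟨x i, Finset.mem_filter.mpr ⟨hxA, hc⟩⟩
      else 0 with hqg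
    have hqprop : ∀ ℓ ∈ Bm, qg ℓ ∈ A ∧ t ℓ i < qg ℓ ∧ qg ℓ ≤ x i := by
      intro ℓ hℓ
      have hp := (Finset.mem_filter.mp hℓ).2
      have hq : qg ℓ = (A.filter (fun z => t ℓ i < z)).min'
          ⟨x i, Finset.mem_filter.mpr ⟨hxA, hp.2.2.1⟩⟩ := dif_pos hp.2.2.1
      have hmm := Finset.mem_filter.mp ((A.filter (fun z => t ℓ i < z)).min'_mem
        ⟨x i, Finset.mem_filter.mpr ⟨hxA, hp.2.2.1⟩⟩)
      refine ⟨by rw [hq]; exact hmm.1, by rw [hq]; exact hmm.2, ?_⟩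
      rw [hq]
      exact Finset.min'_le (A.filter (fun z => t ℓ i < z)) (x i)
        (Finset.mem_filter.mpr ⟨hxA, hp.2.2.1⟩)
    have hmaps : ∀ ℓ ∈ Bm, qg ℓ ∈ DnE.erase l := by
      intro ℓ hℓ
      have hp := (Finset.mem_filter.mp hℓ).2
      obtain ⟨hqA, hqlt, hxq⟩ := hqprop ℓ hℓ
      refine Finset.mem_erase.mpr ⟨(ne_of_lt (lt_of_le_of_lt hp.2.1 hqlt)).symm, ?_⟩
      rw [hDnEdef, Finset.mem_filter]
      refine ⟨(Finset.mem_filter.mp hqA).1, hxq, (Finset.mem_filter.mp hqA).2, ?_⟩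
      intro v hv hcon hvX
      have hq : qg ℓ = (A.filter (fun z => t ℓ i < z)).min'
          ⟨x i, Finset.mem_filter.mpr ⟨hxA, hp.2.2.1⟩⟩ := dif_pos hp.2.2.1
      rcases lt_trichotomy v (t ℓ i) with hlt | heq | hgt
      · exact hcon.2.2.2 (t ℓ i) (mem_vals t ℓ i) ⟨hlt, hqlt⟩
      · exact hp.2.2.2 (heq ▸ hvX)
      · have hvF : v ∈ A.filter (fun z => t ℓ i < z) :=
          Finset.mem_filter.mpr ⟨Finset.mem_filter.mpr ⟨hv, hvX⟩, hgt⟩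
        have hle := Finset.min'_le (A.filter (fun z => t ℓ i < z)) v hvF
        rw [← hq] at hle
        exact absurd (lt_of_le_of_lt hle hcon.2.2.1) (lt_irrefl _)
    have hfib := Finset.card_eq_sum_card_fiberwise hmaps
    have hcast : ENNReal.ofReal ((Bm.card : ℝ))
        = ∑ u ∈ DnE.erase l, ENNReal.ofReal (((Bm.filter (fun ℓ => qg ℓ = u)).card : ℝ)) := by
      rw [← ENNReal.ofReal_sum_of_nonneg (fun _ _ => Nat.cast_nonneg _)]
      congr 1
      rw [hfib]
      push_cast
      rfl
    rw [hcast]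
    apply Finset.sum_le_sum
    intro u hu
    apply ENNReal.ofReal_le_ofReal
    have hup := (Finset.mem_filter.mp (Finset.mem_erase.mp hu).2).2
    have hsubs : Bm.filter (fun ℓ => qg ℓ = u) ⊆ Finset.univ.filter (fun ℓ => t ℓ i < u) := by
      intro ℓ hℓ
      have h1 := Finset.mem_filter.mp hℓ
      obtain ⟨-, hqlt, -⟩ := hqprop ℓ h1.1
      exact Finset.mem_filter.mpr ⟨Finset.mem_univ _, h1.2 ▸ hqlt⟩
    have hcard := Finset.card_le_card hsubs
    have hcard' : ((Bm.filter (fun ℓ => qg ℓ = u)).card : ℝ) ≤ (Nlt t i u : ℝ) := by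
      exact_mod_cast hcard
    have hd : (0 : ℝ) ≤ ((m : ℝ) / α) * (x i - u) :=
      mul_nonneg (div_nonneg (Nat.cast_nonneg _) hα.le) (sub_nonneg.mpr hup.1)
    linarith
  -- covering count
  have hcover : Finset.univ.filter (fun ℓ : Fin n => ℓ ∉ U) ⊆
      ((((Finset.univ.filter (fun ℓ => h < t ℓ i))
        ∪ (Finset.univ.filter (fun ℓ => t ℓ i < l))) ∪ Bp) ∪ Bm) ∪ G := by
    intro ℓ hℓ
    have hnU := (Finset.mem_filter.mp hℓ).2
    simp only [Finset.mem_union]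
    by_cases h1 : h < t ℓ i
    · exact Or.inl (Or.inl (Or.inl (Or.inl (Finset.mem_filter.mpr ⟨Finset.mem_univ _, h1⟩))))
    · by_cases h2 : t ℓ i < l
      · exact Or.inl (Or.inl (Or.inl (Or.inr (Finset.mem_filter.mpr ⟨Finset.mem_univ _, h2⟩))))
      · by_cases h3 : Node.a i (t ℓ i) ∈ X
        · exact Or.inr (Finset.mem_filter.mpr ⟨Finset.mem_univ _, hnU, h3⟩)
        · rcases lt_trichotomy (t ℓ i) (x i) with hc | hc | hc
          · exact Or.inl (Or.inr (Finset.mem_filter.mpr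
              ⟨Finset.mem_univ _, hnU, not_lt.mp h2, hc, h3⟩))
          · exact absurd (hc ▸ hax) h3
          · exact Or.inl (Or.inl (Or.inr (Finset.mem_filter.mpr
              ⟨Finset.mem_univ _, hnU, hc, not_lt.mp h1, h3⟩)))
  have hcount : (n : ℝ) - U.card ≤ ((n : ℝ) - (cnt t i h : ℝ)) + (Nlt t i l : ℝ)
      + (Bp.card : ℝ) + (Bm.card : ℝ) + (G.card : ℝ) := by
    have hsub := Finset.card_le_card hcover
    have hUcompl : Finset.univ.filter (fun ℓ : Fin n => ℓ ∉ U) = Uᶜ := by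
      ext ℓ; simp
    have hUcard : ((Finset.univ.filter (fun ℓ : Fin n => ℓ ∉ U)).card : ℝ)
        = (n : ℝ) - U.card := by
      rw [hUcompl, Finset.card_compl]
      have hle : U.card ≤ Fintype.card (Fin n) := Finset.card_le_univ U
      rw [Nat.cast_sub hle]
      simp
    have hcu := Finset.card_union_le
      ((((Finset.univ.filter (fun ℓ : Fin n => h < t ℓ i))
        ∪ (Finset.univ.filter (fun ℓ : Fin n => t ℓ i < l))) ∪ Bp) ∪ Bm) G
    have hcu2 := Finset.card_union_le
      (((Finset.univ.filter (fun ℓ : Fin n => h < t ℓ i))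
        ∪ (Finset.univ.filter (fun ℓ : Fin n => t ℓ i < l))) ∪ Bp) Bm
    have hcu3 := Finset.card_union_le
      ((Finset.univ.filter (fun ℓ : Fin n => h < t ℓ i))
        ∪ (Finset.univ.filter (fun ℓ : Fin n => t ℓ i < l))) Bp
    have hcu4 := Finset.card_union_le
      (Finset.univ.filter (fun ℓ : Fin n => h < t ℓ i))
      (Finset.univ.filter (fun ℓ : Fin n => t ℓ i < l))
    have hgt := cnt_add_gt t i h
    have hNl : (Finset.univ.filter (fun ℓ : Fin n => t ℓ i < l)).card = Nlt t i l := rfl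
    have htotal : (Finset.univ.filter (fun ℓ : Fin n => ℓ ∉ U)).card ≤
        (Finset.univ.filter (fun ℓ : Fin n => h < t ℓ i)).card + Nlt t i l
        + Bp.card + Bm.card + G.card := by omega
    have hgt' : ((Finset.univ.filter (fun ℓ : Fin n => h < t ℓ i)).card : ℝ)
        = (n : ℝ) - (cnt t i h : ℝ) := by
      have : (cnt t i h : ℝ) + ((Finset.univ.filter
          (fun ℓ : Fin n => h < t ℓ i)).card : ℝ) = (n : ℝ) := by exact_mod_cast hgt
      linarith
    have htotal' : ((Finset.univ.filter (fun ℓ : Fin n => ℓ ∉ U)).card : ℝ) ≤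
        ((Finset.univ.filter (fun ℓ : Fin n => h < t ℓ i)).card : ℝ) + (Nlt t i l : ℝ)
        + (Bp.card : ℝ) + (Bm.card : ℝ) + (G.card : ℝ) := by exact_mod_cast htotal
    linarith
  have hd : (0 : ℝ) ≤ (m : ℝ) / α := div_nonneg (Nat.cast_nonneg _) hα.le
  have hmono : ((m : ℝ) / α) * (hiF t U i - loF t U i) ≤ ((m : ℝ) / α) * (h - l) :=
    mul_le_mul_of_nonneg_left (by linarith) hd
  have hring : ((m : ℝ) / α) * (h - x i) + ((m : ℝ) / α) * (x i - l)
      = ((m : ℝ) / α) * (h - l) := by ring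
  calc ENNReal.ofReal ((n : ℝ) - U.card + ((m : ℝ) / α) * (hiF t U i - loF t U i))
      ≤ ENNReal.ofReal ((((n : ℝ) - (cnt t i h : ℝ) + ((m : ℝ) / α) * (h - x i))
          + (Bp.card : ℝ) + (((Nlt t i l : ℝ) + ((m : ℝ) / α) * (x i - l))
          + (Bm.card : ℝ))) + (G.card : ℝ)) := by
        apply ENNReal.ofReal_le_ofReal
        linarith
    _ ≤ ENNReal.ofReal (((n : ℝ) - (cnt t i h : ℝ) + ((m : ℝ) / α) * (h - x i))
          + (Bp.card : ℝ) + (((Nlt t i l : ℝ) + ((m : ℝ) / α) * (x i - l))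
          + (Bm.card : ℝ))) + ENNReal.ofReal ((G.card : ℝ)) := ENNReal.ofReal_add_le
    _ ≤ (ENNReal.ofReal (((n : ℝ) - (cnt t i h : ℝ) + ((m : ℝ) / α) * (h - x i))
          + (Bp.card : ℝ)) + ENNReal.ofReal (((Nlt t i l : ℝ)
          + ((m : ℝ) / α) * (x i - l)) + (Bm.card : ℝ)))
          + ENNReal.ofReal ((G.card : ℝ)) :=
        add_le_add_left ENNReal.ofReal_add_le _
    _ ≤ ((ENNReal.ofReal ((n : ℝ) - (cnt t i h : ℝ) + ((m : ℝ) / α) * (h - x i))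
          + ENNReal.ofReal ((Bp.card : ℝ)))
          + (ENNReal.ofReal ((Nlt t i l : ℝ) + ((m : ℝ) / α) * (x i - l))
          + ENNReal.ofReal ((Bm.card : ℝ))))
          + ENNReal.ofReal ((G.card : ℝ)) :=
        add_le_add_left (add_le_add ENNReal.ofReal_add_le ENNReal.ofReal_add_le) _
    _ ≤ ((∑ u ∈ UpE, ENNReal.ofReal ((n : ℝ) - (cnt t i u : ℝ)
            + ((m : ℝ) / α) * (u - x i)))
          + ∑ u ∈ DnE, ENNReal.ofReal ((Nlt t i u : ℝ) + ((m : ℝ) / α) * (x i - u)))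
          + ENNReal.ofReal ((G.card : ℝ)) :=
        add_le_add_left (add_le_add hUpSum hDnSum) _
    _ ≤ _ := add_le_add hrows ((le_of_eq (ENNReal.ofReal_natCast _)).trans hAB)

lemma cutVal_low (t : Fin n → Fin m → ℝ) (x : Fin m → ℝ) (α : ℝ) (hα : 0 < α)
    (X : Set (Node n m)) (hsnk : (Node.snk : Node n m) ∉ X)
    (hax : ∀ i, Node.a i (x i) ∈ X) (hxv : ∀ i, x i ∈ vals t i)
    (U : Finset (Fin n)) (hUne : U.Nonempty)
    (hU : ∀ ℓ : Fin n, ℓ ∈ U ↔ Node.b ℓ ∈ X)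
    (hUa : ∀ ℓ ∈ U, ∀ i, Node.a i (t ℓ i) ∈ X) :
    ENNReal.ofReal ((n : ℝ) * (m : ℝ)
      + ((m : ℝ) / α) * ((∑ i : Fin m, (hiF t U i - loF t U i)) - α * U.card))
      ≤ cutVal t x α X := by
  classical
  rw [cutVal_pieces]
  have hstep : ENNReal.ofReal ((n : ℝ) * (m : ℝ)
      + ((m : ℝ) / α) * ((∑ i : Fin m, (hiF t U i - loF t U i)) - α * U.card))
      = ∑ i : Fin m, ENNReal.ofReal ((n : ℝ) - U.card
          + ((m : ℝ) / α) * (hiF t U i - loF t U i)) := by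
    rw [← ENNReal.ofReal_sum_of_nonneg]
    · congr 1
      rw [Finset.sum_add_distrib, Finset.sum_const, ← Finset.mul_sum]
      have hα' : α ≠ 0 := ne_of_gt hα
      field_simp
      simp only [Finset.card_univ, Fintype.card_fin]; ring
    · intro i _
      have hc : (U.card : ℝ) ≤ (n : ℝ) := by
        exact_mod_cast (Finset.card_le_univ U).trans_eq (by simp)
      have hd : (0 : ℝ) ≤ ((m : ℝ) / α) := div_nonneg (Nat.cast_nonneg _) hα.le
      nlinarith [loF_le_hiF t hUne i]
  rw [hstep]
  have hmain : ∑ i : Fin m, ENNReal.ofReal ((n : ℝ) - U.card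
      + ((m : ℝ) / α) * (hiF t U i - loF t U i))
      ≤ ∑ i : Fin m, (((∑ u ∈ vals t i, ∑ v ∈ vals t i, cf t x α X (Node.a i u) (Node.a i v))
        + ∑ v ∈ vals t i, cf t x α X (Node.a i v) Node.snk)
        + ∑ ℓ : Fin n, cf t x α X (Node.a i (t ℓ i)) (Node.b ℓ)) :=
    Finset.sum_le_sum fun i _ =>
      per_coord_low t x α hα X hsnk i (hax i) (hxv i) U hUne hU (fun ℓ hℓ => hUa ℓ hℓ i)
  refine le_trans hmain ?_
  rw [Finset.sum_add_distrib, Finset.sum_add_distrib]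
  calc ((∑ i : Fin m, ∑ u ∈ vals t i, ∑ v ∈ vals t i, cf t x α X (Node.a i u) (Node.a i v))
        + ∑ i : Fin m, ∑ v ∈ vals t i, cf t x α X (Node.a i v) Node.snk)
        + ∑ i : Fin m, ∑ ℓ : Fin n, cf t x α X (Node.a i (t ℓ i)) (Node.b ℓ)
      ≤ (((∑ i : Fin m, ∑ u ∈ vals t i, ∑ v ∈ vals t i, cf t x α X (Node.a i u) (Node.a i v))
        + ∑ i : Fin m, cf t x α X Node.src (Node.a i (x i)))
        + ∑ i : Fin m, ∑ v ∈ vals t i, cf t x α X (Node.a i v) Node.snk)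
        + ∑ i : Fin m, ∑ ℓ : Fin n, cf t x α X (Node.a i (t ℓ i)) (Node.b ℓ) :=
        add_le_add_left (add_le_add_left (self_le_add_right _ _) _) _
    _ ≤ _ := self_le_add_right _ _

lemma edge_le_cutVal (t : Fin n → Fin m → ℝ) (x : Fin m → ℝ) (α : ℝ) (X : Set (Node n m))
    {p q : Node n m} (hp : p ∈ X) (hq : q ∉ X) :
    wgt t x α p q ≤ cutVal t x α X := by
  rw [cutVal_eq_tsum]
  have := ENNReal.le_tsum (f := fun pq : Node n m × Node n m => cf t x α X pq.1 pq.2) (p, q)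
  simpa [cf, hp, hq] using this

def epair (t : Fin n → Fin m → ℝ) (x₀ : Fin n) : Node n m × Node n m → ℝ≥0∞ :=
  fun pq => if pq.2 = Node.b x₀ ∧ (∃ i, pq.1 = Node.a i (t x₀ i)) then 1 else 0

lemma bx₀_mem (t : Fin n → Fin m → ℝ) (x₀ : Fin n) (α : ℝ) (hm : 0 < m)
    (X : Set (Node n m)) (hsrc : (Node.src : Node n m) ∈ X)
    (hsnk : (Node.snk : Node n m) ∉ X)
    (hmin : ∀ X' : Set (Node n m), Node.src ∈ X' → Node.snk ∉ X' →
      cutVal t (t x₀) α X ≤ cutVal t (t x₀) α X')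
    (hfin : cutVal t (t x₀) α X ≠ ⊤)
    (haxX : ∀ i, Node.a i (t x₀ i) ∈ X) : Node.b x₀ ∈ X := by
  classical
  by_contra hbx
  set X' : Set (Node n m) := X ∪ {Node.b x₀} with hX'
  have hpt : ∀ pq : Node n m × Node n m,
      cf t (t x₀) α X' pq.1 pq.2 + epair t x₀ pq ≤ cf t (t x₀) α X pq.1 pq.2 := by
    rintro ⟨p, q⟩
    by_cases he : q = Node.b x₀ ∧ ∃ i, p = Node.a i (t x₀ i)
    · obtain ⟨rfl, i, rfl⟩ := he
      have h1 : cf t (t x₀) α X' (Node.a i (t x₀ i)) (Node.b x₀) = 0 := by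
        rw [cf, if_neg]
        rintro ⟨-, hb⟩
        exact hb (Set.mem_union_right _ rfl)
      have h2 : cf t (t x₀) α X (Node.a i (t x₀ i)) (Node.b x₀) = 1 := by
        rw [cf, if_pos ⟨haxX i, hbx⟩, wgt_ab, if_pos rfl]
      have h3 : epair t x₀ (Node.a i (t x₀ i), Node.b x₀) = 1 := by
        rw [epair, if_pos ⟨rfl, ⟨i, rfl⟩⟩]
      rw [h1, h2, h3, zero_add]
    · have h3 : epair t x₀ (p, q) = 0 := by rw [epair, if_neg he]
      rw [h3, add_zero, cf, cf]
      split_ifs with h1 h2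
      · exact le_rfl
      · -- p ∈ X', q ∉ X', but not (p ∈ X ∧ q ∉ X)
        have hqX : q ∉ X := fun hc => h1.2 (Set.mem_union_left _ hc)
        have hpX : p ∉ X := fun hc => h2 ⟨hc, hqX⟩
        have hpb : p = Node.b x₀ := by
          rcases h1.1 with hc | hc
          · exact absurd hc hpX
          · exact hc
        subst hpb
        refine le_of_eq ?_
        match q with
        | .a i v =>
            rw [wgt_ba, if_neg]
            intro hv
            exact h1.2 (Set.mem_union_left _ (hv ▸ haxX i))
        | .b ℓ => rfl
        | .src => rfl
        | .snk => rfl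
      · exact zero_le
      · exact zero_le
  have hsum_e : ∑' pq : Node n m × Node n m, epair t x₀ pq = (m : ℝ≥0∞) := by
    rw [tsum_eq_sum
      (s := Finset.univ.image fun i : Fin m => ((Node.a i (t x₀ i) : Node n m), Node.b x₀))]
    · rw [Finset.sum_image]
      · have : ∀ i ∈ (Finset.univ : Finset (Fin m)),
            epair t x₀ (Node.a i (t x₀ i), Node.b x₀) = 1 := by
          intro i _
          rw [epair, if_pos ⟨rfl, ⟨i, rfl⟩⟩]
        rw [Finset.sum_congr rfl this]
        simp
      · intro i _ j _ hij
        simp only [Prod.mk.injEq] at hij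
        have := hij.1
        simp only [Node.a.injEq] at this
        exact this.1
    · intro pq hpq
      rw [epair, if_neg]
      rintro ⟨h2, i, h1⟩
      apply hpq
      rw [Finset.mem_image]
      refine ⟨i, Finset.mem_univ i, ?_⟩
      rw [Prod.ext_iff]
      exact ⟨h1.symm, h2.symm⟩
  have key : cutVal t (t x₀) α X' + (m : ℝ≥0∞) ≤ cutVal t (t x₀) α X := by
    rw [cutVal_eq_tsum, cutVal_eq_tsum, ← hsum_e, ← ENNReal.tsum_add]
    exact ENNReal.tsum_le_tsum hpt
  have hle : cutVal t (t x₀) α X ≤ cutVal t (t x₀) α X' := by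
    apply hmin
    · exact Set.mem_union_left _ hsrc
    · rintro (hc | hc)
      · exact hsnk hc
      · simp at hc
  have h2 : cutVal t (t x₀) α X + (m : ℝ≥0∞) ≤ cutVal t (t x₀) α X + 0 := by
    rw [add_zero]
    exact (add_le_add_left hle _).trans key
  have h3 : (m : ℝ≥0∞) ≤ 0 := (ENNReal.add_le_add_iff_left hfin).mp h2
  simp only [nonpos_iff_eq_zero, Nat.cast_eq_zero] at h3
  omega

end RegBand

open RegBand in
/-- Corollary to Proposition 3: if `(X, Xᶜ)` is a minimum `(θ,η)`-cut of the graph built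
from the time series `t₁, …, t_n` (with seed `x = t x₀` and parameter `α > 0`), and
`U = {ℓ : b ℓ ∈ X}`, then `Reg(U;α)` equals the minimum of `Reg(·;α)` over all index sets
containing the seed; equivalently, the minimum cut value equals
`n·m + (m/α) · min Reg`. -/
theorem mincut_solves_regband {n m : ℕ} (hn : 0 < n) (hm : 0 < m)
    (t : Fin n → Fin m → ℝ) (htinj : Function.Injective t)
    (x₀ : Fin n) (α : ℝ) (hα : 0 < α)
    (X : Set (Node n m)) (hsrc : Node.src ∈ X) (hsnk : Node.snk ∉ X)
    (hmin : ∀ X' : Set (Node n m), Node.src ∈ X' → Node.snk ∉ X' →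
      cutVal t (t x₀) α X ≤ cutVal t (t x₀) α X')
    (U : Finset (Fin n)) (hU : ∀ ℓ : Fin n, ℓ ∈ U ↔ Node.b ℓ ∈ X) :
    IsLeast {r : ℝ | ∃ S : Finset (Fin n), x₀ ∈ S ∧ r = regIdx t α S} (regIdx t α U) ∧
    cutVal t (t x₀) α X =
      ENNReal.ofReal ((n : ℝ) * (m : ℝ) + ((m : ℝ) / α) * regIdx t α U) := by
  classical
  have hxv : ∀ i, t x₀ i ∈ vals t i := fun i => mem_vals t x₀ i
  have hreg : ∀ S : Finset (Fin n), regIdx t α S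
      = (∑ i : Fin m, (hiF t S i - loF t S i)) - α * S.card := fun S => rfl
  have hub : ∀ S : Finset (Fin n), x₀ ∈ S →
      cutVal t (t x₀) α X
        ≤ ENNReal.ofReal ((n : ℝ) * (m : ℝ) + ((m : ℝ) / α) * regIdx t α S) := by
    intro S hS
    have hSne : S.Nonempty := ⟨x₀, hS⟩
    refine (hmin (XS t S) src_mem_XS snk_not_mem_XS).trans ?_
    rw [hreg]
    exact cutVal_XS_le t (t x₀) α hα S hSne
      (fun i => ⟨loF_le t hSne i hS, le_hiF t hSne i hS⟩)
  have hfin : cutVal t (t x₀) α X ≠ ⊤ :=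
    ne_top_of_le_ne_top ENNReal.ofReal_ne_top (hub {x₀} (Finset.mem_singleton_self x₀))
  have haxX : ∀ i, Node.a i (t x₀ i) ∈ X := by
    intro i
    by_contra hni
    apply hfin
    have hle := edge_le_cutVal t (t x₀) α X hsrc hni
    rw [wgt_sa, if_pos rfl] at hle
    exact top_le_iff.mp hle
  have hUaX : ∀ ℓ ∈ U, ∀ i, Node.a i (t ℓ i) ∈ X := by
    intro ℓ hℓ i
    by_contra hni
    apply hfin
    have hle := edge_le_cutVal t (t x₀) α X ((hU ℓ).mp hℓ) hni
    rw [wgt_ba, if_pos rfl] at hle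
    exact top_le_iff.mp hle
  have hx₀U : x₀ ∈ U := (hU x₀).mpr (bx₀_mem t x₀ α hm X hsrc hsnk hmin hfin haxX)
  have hUne : U.Nonempty := ⟨x₀, hx₀U⟩
  have hlow : ENNReal.ofReal ((n : ℝ) * (m : ℝ) + ((m : ℝ) / α) * regIdx t α U)
      ≤ cutVal t (t x₀) α X := by
    rw [hreg]
    exact cutVal_low t (t x₀) α hα X hsnk haxX hxv U hUne hU hUaX
  have heq : cutVal t (t x₀) α X
      = ENNReal.ofReal ((n : ℝ) * (m : ℝ) + ((m : ℝ) / α) * regIdx t α U) :=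
    le_antisymm (hub U hx₀U) hlow
  refine ⟨⟨⟨U, hx₀U, rfl⟩, ?_⟩, heq⟩
  rintro r ⟨S, hS, rfl⟩
  have hSne : S.Nonempty := ⟨x₀, hS⟩
  have hAS : 0 ≤ (n : ℝ) * (m : ℝ) + ((m : ℝ) / α) * regIdx t α S := by
    rw [hreg]
    have hscore : 0 ≤ ∑ i : Fin m, (hiF t S i - loF t S i) :=
      Finset.sum_nonneg fun i _ => sub_nonneg.mpr (loF_le_hiF t hSne i)
    have hcard : (S.card : ℝ) ≤ (n : ℝ) := by
      exact_mod_cast (Finset.card_le_univ S).trans_eq (by simp)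
    have hd : (0 : ℝ) ≤ ((m : ℝ) / α) := div_nonneg (Nat.cast_nonneg _) hα.le
    have hα' : α ≠ 0 := ne_of_gt hα
    have hexp : (n : ℝ) * (m : ℝ)
        + ((m : ℝ) / α) * ((∑ i : Fin m, (hiF t S i - loF t S i)) - α * S.card)
        = (m : ℝ) * ((n : ℝ) - S.card)
          + ((m : ℝ) / α) * (∑ i : Fin m, (hiF t S i - loF t S i)) := by
      field_simp
      ring
    rw [hexp]
    have h1 : (0 : ℝ) ≤ (m : ℝ) * ((n : ℝ) - S.card) :=
      mul_nonneg (Nat.cast_nonneg _) (by linarith)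
    nlinarith
  have hcmp : ENNReal.ofReal ((n : ℝ) * (m : ℝ) + ((m : ℝ) / α) * regIdx t α U)
      ≤ ENNReal.ofReal ((n : ℝ) * (m : ℝ) + ((m : ℝ) / α) * regIdx t α S) := by
    rw [← heq]
    exact hub S hS
  have hre := (ENNReal.ofReal_le_ofReal_iff hAS).mp hcmp
  have hdpos : (0 : ℝ) < (m : ℝ) / α := div_pos (by exact_mod_cast hm) hα
  have : ((m : ℝ) / α) * regIdx t α U ≤ ((m : ℝ) / α) * regIdx t α S := by linarith
  exact le_of_mul_le_mul_left this hdpos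

end
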